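/- arXiv:1009.2447 — 3 statements merged into one kernel-verified Lean document; each statement's English description precedes it below -/
import Mathlib

section
/- With the same setup, define the Cauchy transform Q̃_j(v) = ∬ q_j(η) w(ξ,η)/(v-ξ) dξ dη for v ∈ ℂ \ ℝ, and the kernel K̃_{1,1}(x,v) = (Σ_{i=0}^{n-1} h_i^{-2} p_i(x) Q̃_i(v)) - 1/(v-x). Then for every v ∈ ℂ \ ℝ and every polynomial q of degree at most n-1, ∬ K̃_{1,1}(ξ,v) q(η) w(ξ,η) dξ dη = 0. -/
open MeasureTheory Polynomial

lemma expand_aux (q : ℕ → Polynomial ℝ) (hqm : ∀ j, (q j).Monic)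
    (hqd : ∀ j, (q j).natDegree = j) (n : ℕ) :
    ∀ d (Q : Polynomial ℝ), Q.natDegree ≤ d → Q.degree < n →
      ∃ c : ℕ → ℝ, Q = ∑ j ∈ Finset.range n, Polynomial.C (c j) * q j := by
  intro d
  induction d with
  | zero =>
    intro Q hQd hQn
    by_cases hQ0 : Q = 0
    · exact ⟨0, by simp [hQ0]⟩
    · have hn : 0 < n := by
        rcases Nat.eq_zero_or_pos n with h | h
        · subst h
          rw [Nat.cast_zero, Nat.WithBot.lt_zero_iff, Polynomial.degree_eq_bot] at hQn
          exact absurd hQn hQ0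
        · exact h
      have hq0 : q 0 = 1 := (hqm 0).natDegree_eq_zero.1 (hqd 0)
      refine ⟨fun j => if j = 0 then Q.coeff 0 else 0, ?_⟩
      rw [Finset.sum_eq_single 0]
      · simp [hq0]
        exact Polynomial.eq_C_of_natDegree_le_zero hQd
      · intro j _ hj; simp [hj]
      · intro h; exact absurd (Finset.mem_range.2 hn) h
  | succ d ih =>
    intro Q hQd hQn
    by_cases hle : Q.natDegree ≤ d
    · exact ih Q hle hQn
    · have hdeg : Q.natDegree = d + 1 := le_antisymm hQd (not_le.1 hle)
      have hQ0 : Q ≠ 0 := fun h => by simp [h] at hdeg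
      have ha0 : Q.leadingCoeff ≠ 0 := Polynomial.leadingCoeff_ne_zero.2 hQ0
      have hdq : Q.degree = (Polynomial.C Q.leadingCoeff * q (d+1)).degree := by
        rw [Polynomial.degree_C_mul ha0, Polynomial.degree_eq_natDegree hQ0, hdeg,
          Polynomial.degree_eq_natDegree (hqm (d+1)).ne_zero, hqd]
      have hlc : Q.leadingCoeff = (Polynomial.C Q.leadingCoeff * q (d+1)).leadingCoeff := by
        rw [Polynomial.leadingCoeff_mul, Polynomial.leadingCoeff_C, (hqm (d+1)).leadingCoeff,
          mul_one]
      have hlt : (Q - Polynomial.C Q.leadingCoeff * q (d+1)).degree < Q.degree :=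
        Polynomial.degree_sub_lt hdq hQ0 hlc
      have hdn : d + 1 < n := by
        have : ((d+1 : ℕ) : WithBot ℕ) < (n : ℕ) := by
          rw [← hdeg, ← Polynomial.degree_eq_natDegree hQ0]; exact hQn
        exact_mod_cast this
      have hnd' : (Q - Polynomial.C Q.leadingCoeff * q (d+1)).natDegree ≤ d := by
        by_cases h0 : Q - Polynomial.C Q.leadingCoeff * q (d+1) = 0
        · simp [h0]
        · have hQdeg : Q.degree = ((d+1 : ℕ) : WithBot ℕ) := by
            rw [Polynomial.degree_eq_natDegree hQ0, hdeg]
          have hc : (Q - Polynomial.C Q.leadingCoeff * q (d+1)).degree < ((d+1 : ℕ) : WithBot ℕ) := by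
            rw [hQdeg] at hlt; exact hlt
          have := (Polynomial.natDegree_lt_iff_degree_lt h0).2 hc
          omega
      obtain ⟨c', hc'⟩ := ih _ hnd' (lt_trans hlt hQn)
      refine ⟨fun j => c' j + if j = d+1 then Q.leadingCoeff else 0, ?_⟩
      have hsplit : ∀ j, Polynomial.C (c' j + if j = d+1 then Q.leadingCoeff else 0) * q j
          = Polynomial.C (c' j) * q j + (if j = d+1 then Polynomial.C Q.leadingCoeff * q j else 0) := by
        intro j
        rw [map_add, add_mul, apply_ite Polynomial.C, map_zero]
        by_cases h : j = d+1 <;> simp [h]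
      rw [Finset.sum_congr rfl (fun j _ => hsplit j), Finset.sum_add_distrib, ← hc',
        Finset.sum_ite_eq' (Finset.range n) (d+1), if_pos (Finset.mem_range.2 hdn)]
      ring

private lemma ofReal_integral' {X : Type*} [MeasurableSpace X] (μ : Measure X) (f : X → ℝ) :
    ∫ x, ((f x : ℝ) : ℂ) ∂μ = ((∫ x, f x ∂μ : ℝ) : ℂ) := integral_ofReal

/-- Vanishing property of the transformed kernel `K̃₁,₁` (Lemma 4, eq. (42)). -/
theorem stmt_3 (ω : ℝ → ℝ → ℝ) (p q : ℕ → Polynomial ℝ) (hsq : ℕ → ℝ) (n : ℕ)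
    (hpm : ∀ i, (p i).Monic) (hpd : ∀ i, (p i).natDegree = i)
    (hqm : ∀ j, (q j).Monic) (hqd : ∀ j, (q j).natDegree = j)
    (hh : ∀ i, hsq i ≠ 0)
    (hint : ∀ P Q : Polynomial ℝ,
      Integrable (fun z : ℝ × ℝ => P.eval z.1 * Q.eval z.2 * ω z.1 z.2))
    (hbi : ∀ i j, (∫ x : ℝ, ∫ y : ℝ, (p i).eval x * (q j).eval y * ω x y)
      = if i = j then hsq i else 0)
    (Qt : ℕ → ℂ → ℂ)
    (hQt : ∀ j (v : ℂ), v.im ≠ 0 →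
      Qt j v = ∫ ξ : ℝ, ∫ η : ℝ, (((q j).eval η : ℝ) : ℂ) * (ω ξ η : ℂ) / (v - (ξ : ℂ)))
    (Kt : ℝ → ℂ → ℂ)
    (hKt : ∀ (x : ℝ) (v : ℂ), Kt x v =
      (∑ i ∈ Finset.range n, ((hsq i : ℂ))⁻¹ * (((p i).eval x : ℝ) : ℂ) * Qt i v)
        - 1 / (v - (x : ℂ))) :
    ∀ (v : ℂ), v.im ≠ 0 → ∀ (Q : Polynomial ℝ), Q.degree < n →
      (∫ ξ : ℝ, ∫ η : ℝ, Kt ξ v * ((Q.eval η : ℝ) : ℂ) * (ω ξ η : ℂ)) = 0 := by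
  intro v hv Q hQ
  -- the Cauchy factor is nonvanishing, continuous and bounded
  have hvx : ∀ x : ℝ, v - (x : ℂ) ≠ 0 := by
    intro x h
    apply hv
    have := congrArg Complex.im h
    simpa using this
  have hcont : Continuous (fun x : ℝ => (v - (x : ℂ))⁻¹) :=
    (continuous_const.sub Complex.continuous_ofReal).inv₀ hvx
  have hbdd : ∀ x : ℝ, ‖(v - (x : ℂ))⁻¹‖ ≤ |v.im|⁻¹ := by
    intro x
    rw [norm_inv]
    apply inv_anti₀ (abs_pos.2 hv)
    calc |v.im| = |(v - (x : ℂ)).im| := by simp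
    _ ≤ ‖v - (x : ℂ)‖ := Complex.abs_im_le_norm _
    _ = ‖v - (x : ℂ)‖ := rfl
  -- product-measure versions of the integrability hypothesis
  have hintP : ∀ P R : Polynomial ℝ,
      Integrable (fun z : ℝ × ℝ => P.eval z.1 * R.eval z.2 * ω z.1 z.2)
        ((volume : Measure ℝ).prod volume) := by
    intro P R
    exact hint P R
  have hintC : ∀ R : Polynomial ℝ,
      Integrable (fun z : ℝ × ℝ => ((R.eval z.2 : ℝ) : ℂ) * ((ω z.1 z.2 : ℝ) : ℂ) / (v - (z.1 : ℂ)))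
        ((volume : Measure ℝ).prod volume) := by
    intro R
    have h1 : Integrable (fun z : ℝ × ℝ => ((R.eval z.2 * ω z.1 z.2 : ℝ) : ℂ))
        ((volume : Measure ℝ).prod volume) := by
      have := (hintP 1 R).ofReal (𝕜 := ℂ)
      simpa using this
    have h2 := h1.bdd_mul
      (((hcont.comp continuous_fst).aestronglyMeasurable :
        AEStronglyMeasurable (fun z : ℝ × ℝ => (v - (z.1 : ℂ))⁻¹) _))
      (c := |v.im|⁻¹) (ae_of_all _ fun z => hbdd z.1)
    refine h2.congr (Filter.Eventually.of_forall fun z => ?_)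
    simp only [Function.comp_apply]
    push_cast
    ring
  -- Fubini reductions
  have fubR : ∀ P R : Polynomial ℝ, (∫ x : ℝ, ∫ y : ℝ, P.eval x * R.eval y * ω x y)
      = ∫ z, P.eval z.1 * R.eval z.2 * ω z.1 z.2 ∂((volume : Measure ℝ).prod volume) :=
    fun P R => integral_integral (hintP P R)
  have fubC : ∀ R : Polynomial ℝ,
      (∫ x : ℝ, ∫ y : ℝ, ((R.eval y : ℝ) : ℂ) * ((ω x y : ℝ) : ℂ) / (v - (x : ℂ)))
      = ∫ z, ((R.eval z.2 : ℝ) : ℂ) * ((ω z.1 z.2 : ℝ) : ℂ) / (v - (z.1 : ℂ))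
          ∂((volume : Measure ℝ).prod volume) :=
    fun R => integral_integral (hintC R)
  have hQtS : ∀ j, Qt j v = ∫ z, (((q j).eval z.2 : ℝ) : ℂ) * ((ω z.1 z.2 : ℝ) : ℂ) / (v - (z.1 : ℂ))
      ∂((volume : Measure ℝ).prod volume) :=
    fun j => (hQt j v hv).trans (fubC (q j))
  -- expand Q in the q-basis
  obtain ⟨c, hc⟩ := expand_aux q hqm hqd n Q.natDegree Q le_rfl hQ
  have heval : ∀ y : ℝ, Q.eval y = ∑ j ∈ Finset.range n, c j * (q j).eval y := by
    intro y; rw [hc]; simp [Polynomial.eval_finset_sum]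
  -- value of the moment integrals against Q
  have hJ : ∀ i ∈ Finset.range n,
      (∫ z, (p i).eval z.1 * Q.eval z.2 * ω z.1 z.2 ∂((volume : Measure ℝ).prod volume))
      = c i * hsq i := by
    intro i hi
    have hfun : (fun z : ℝ × ℝ => (p i).eval z.1 * Q.eval z.2 * ω z.1 z.2)
        = fun z => ∑ j ∈ Finset.range n, c j * ((p i).eval z.1 * (q j).eval z.2 * ω z.1 z.2) := by
      funext z
      rw [heval z.2, Finset.mul_sum, Finset.sum_mul]
      exact Finset.sum_congr rfl fun j _ => by ring
    rw [hfun, integral_finset_sum _ (fun j _ => ((hintP (p i) (q j)).const_mul (c j)))]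
    have hterm : ∀ j ∈ Finset.range n,
        (∫ z, c j * ((p i).eval z.1 * (q j).eval z.2 * ω z.1 z.2)
          ∂((volume : Measure ℝ).prod volume))
        = if i = j then c j * hsq i else 0 := by
      intro j _
      rw [integral_const_mul, ← fubR (p i) (q j), hbi i j]
      by_cases h : i = j <;> simp [h]
    rw [Finset.sum_congr rfl hterm]
    simp [Finset.mem_range.1 hi]
  -- value of the Cauchy-type integral against Q
  have hS : (∫ z, ((Q.eval z.2 : ℝ) : ℂ) * ((ω z.1 z.2 : ℝ) : ℂ) / (v - (z.1 : ℂ))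
      ∂((volume : Measure ℝ).prod volume)) = ∑ j ∈ Finset.range n, (c j : ℂ) * Qt j v := by
    have hfun : (fun z : ℝ × ℝ => ((Q.eval z.2 : ℝ) : ℂ) * ((ω z.1 z.2 : ℝ) : ℂ) / (v - (z.1 : ℂ)))
        = fun z => ∑ j ∈ Finset.range n,
            (c j : ℂ) * ((((q j).eval z.2 : ℝ) : ℂ) * ((ω z.1 z.2 : ℝ) : ℂ) / (v - (z.1 : ℂ))) := by
      funext z
      rw [heval z.2]
      push_cast
      rw [Finset.sum_mul, Finset.sum_div]
      exact Finset.sum_congr rfl fun j _ => by ring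
    rw [hfun, integral_finset_sum _ (fun j _ => ((hintC (q j)).const_mul ((c j : ℂ))))]
    exact Finset.sum_congr rfl fun j _ => by rw [integral_const_mul, ← hQtS j]
  -- the inner integral
  set g : ℝ → ℝ := fun x => ∫ y : ℝ, Q.eval y * ω x y with hg
  have hGint : ∀ P : Polynomial ℝ, Integrable (fun x : ℝ => P.eval x * g x) volume := by
    intro P
    have h := (hintP P Q).integral_prod_left
    refine h.congr (Filter.Eventually.of_forall fun x => ?_)
    simp only [hg, mul_assoc, integral_const_mul]
  have hgC : Integrable (fun x : ℝ => ((g x : ℝ) : ℂ)) volume := by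
    have := (hGint 1).ofReal (𝕜 := ℂ)
    simpa using this
  have hB : Integrable (fun x : ℝ => (v - (x : ℂ))⁻¹ * ((g x : ℝ) : ℂ)) volume :=
    hgC.bdd_mul hcont.aestronglyMeasurable (c := |v.im|⁻¹) (ae_of_all _ hbdd)
  have hE : ∀ i : ℕ, Integrable (fun x : ℝ => (((p i).eval x * g x : ℝ) : ℂ)) volume :=
    fun i => (hGint (p i)).ofReal
  have step1 : (∫ x : ℝ, ∫ y : ℝ, Kt x v * ((Q.eval y : ℝ) : ℂ) * ((ω x y : ℝ) : ℂ))
      = ∫ x : ℝ, Kt x v * ((g x : ℝ) : ℂ) := by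
    refine integral_congr_ae (Filter.Eventually.of_forall fun x => ?_)
    simp only [hg, mul_assoc, ← Complex.ofReal_mul, integral_const_mul]
    rw [ofReal_integral']
  have hptw : ∀ x : ℝ, Kt x v * ((g x : ℝ) : ℂ)
      = (∑ i ∈ Finset.range n, ((hsq i : ℂ))⁻¹ * Qt i v * (((p i).eval x * g x : ℝ) : ℂ))
        - (v - (x : ℂ))⁻¹ * ((g x : ℝ) : ℂ) := by
    intro x
    rw [hKt, sub_mul, Finset.sum_mul]
    push_cast
    congr 1
    · exact Finset.sum_congr rfl fun i _ => by ring
    · rw [one_div]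
  have step2 : (∫ x : ℝ, Kt x v * ((g x : ℝ) : ℂ))
      = (∑ i ∈ Finset.range n,
          ((hsq i : ℂ))⁻¹ * Qt i v * ((∫ x : ℝ, (p i).eval x * g x : ℝ) : ℂ))
        - ∫ x : ℝ, (v - (x : ℂ))⁻¹ * ((g x : ℝ) : ℂ) := by
    rw [integral_congr_ae (Filter.Eventually.of_forall hptw)]
    rw [integral_sub (integrable_finset_sum _ fun i _ => (hE i).const_mul _) hB,
      integral_finset_sum _ fun i _ => (hE i).const_mul _]
    congr 1
    refine Finset.sum_congr rfl fun i _ => ?_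
    rw [integral_const_mul, ofReal_integral']
  have hJ2 : ∀ P : Polynomial ℝ, (∫ x : ℝ, P.eval x * g x)
      = ∫ z, P.eval z.1 * Q.eval z.2 * ω z.1 z.2 ∂((volume : Measure ℝ).prod volume) := by
    intro P
    rw [← fubR P Q]
    refine integral_congr_ae (Filter.Eventually.of_forall fun x => ?_)
    simp only [hg, mul_assoc, integral_const_mul]
  have hT : (∫ x : ℝ, (v - (x : ℂ))⁻¹ * ((g x : ℝ) : ℂ))
      = ∫ z, ((Q.eval z.2 : ℝ) : ℂ) * ((ω z.1 z.2 : ℝ) : ℂ) / (v - (z.1 : ℂ))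
          ∂((volume : Measure ℝ).prod volume) := by
    rw [← fubC Q]
    refine integral_congr_ae (Filter.Eventually.of_forall fun x => ?_)
    simp only [hg, div_eq_mul_inv, ← Complex.ofReal_mul, integral_mul_const]
    rw [ofReal_integral']
    ring
  rw [step1, step2, hT, hS]
  have hfin : (∑ i ∈ Finset.range n,
      ((hsq i : ℂ))⁻¹ * Qt i v * ((∫ x : ℝ, (p i).eval x * g x : ℝ) : ℂ))
      = ∑ j ∈ Finset.range n, (c j : ℂ) * Qt j v := by
    refine Finset.sum_congr rfl fun i hi => ?_
    rw [hJ2 (p i), hJ i hi]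
    push_cast
    have hne : (hsq i : ℂ) ≠ 0 := Complex.ofReal_ne_zero.2 (hh i)
    field_simp
  rw [hfin, sub_self]
end

section
/- Let w(x,y) be a bivariate weight with biorthogonal polynomials p_i, q_j and constants h_i². Fix distinct points x₁,…,x_I ∈ ℂ and define w̃(x,y) = (∏_{i=1}^I (x−x_i)) w(x,y). Assume the determinant D = det(p_{n+j-1}(x_i))_{i,j=1}^I (columns indexed by degrees n,…,n+I−1) is nonzero. Then the function A_n(x) = (∏_{i=1}^I (x−x_i))^{-1} · det M / D, where M is the (I+1)×(I+1) matrix with rows (p_n(x_k),…,p_{n+I}(x_k)) for k=1,…,I and last row (p_n(x),…,p_{n+I}(x)), is a monic polynomial of degree n satisfying ∬ A_n(x) q(y) w̃(x,y) dx dy = 0 for every polynomial q of degree at most n−1. -/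
open MeasureTheory Polynomial

noncomputable def Bpair (ω : ℝ → ℝ → ℝ) (P Q : Polynomial ℝ) : ℝ :=
  ∫ z : ℝ × ℝ, P.eval z.1 * Q.eval z.2 * ω z.1 z.2

lemma Bpair_eq_iter (ω : ℝ → ℝ → ℝ) (P Q : Polynomial ℝ)
    (h : Integrable (fun z : ℝ × ℝ => P.eval z.1 * Q.eval z.2 * ω z.1 z.2)) :
    (∫ x : ℝ, ∫ y : ℝ, P.eval x * Q.eval y * ω x y) = Bpair ω P Q := by
  rw [Bpair, MeasureTheory.Measure.volume_eq_prod ℝ ℝ]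
  exact MeasureTheory.integral_integral
    (f := fun x y => P.eval x * Q.eval y * ω x y)
    (by rw [← MeasureTheory.Measure.volume_eq_prod ℝ ℝ]; exact h)

lemma Bpair_add (ω : ℝ → ℝ → ℝ)
    (hint : ∀ P Q : Polynomial ℝ,
      Integrable (fun z : ℝ × ℝ => P.eval z.1 * Q.eval z.2 * ω z.1 z.2))
    (P₁ P₂ Q : Polynomial ℝ) :
    Bpair ω (P₁ + P₂) Q = Bpair ω P₁ Q + Bpair ω P₂ Q := by
  rw [Bpair, Bpair, Bpair, ← integral_add (hint P₁ Q) (hint P₂ Q)]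
  congr 1; funext z; simp [eval_add]; ring

lemma Bpair_Cmul (ω : ℝ → ℝ → ℝ) (a : ℝ) (P Q : Polynomial ℝ) :
    Bpair ω (Polynomial.C a * P) Q = a * Bpair ω P Q := by
  rw [Bpair, Bpair, ← integral_const_mul]
  congr 1; funext z; simp; ring

lemma Bpair_zero (ω : ℝ → ℝ → ℝ) (Q : Polynomial ℝ) : Bpair ω 0 Q = 0 := by
  rw [Bpair]; simp

lemma Bpair_zero_right (ω : ℝ → ℝ → ℝ) (P : Polynomial ℝ) : Bpair ω P 0 = 0 := by
  rw [Bpair]; simp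

lemma Bpair_add_right (ω : ℝ → ℝ → ℝ)
    (hint : ∀ P Q : Polynomial ℝ,
      Integrable (fun z : ℝ × ℝ => P.eval z.1 * Q.eval z.2 * ω z.1 z.2))
    (P Q₁ Q₂ : Polynomial ℝ) :
    Bpair ω P (Q₁ + Q₂) = Bpair ω P Q₁ + Bpair ω P Q₂ := by
  rw [Bpair, Bpair, Bpair, ← integral_add (hint P Q₁) (hint P Q₂)]
  congr 1; funext z; simp [eval_add]; ring

lemma Bpair_Cmul_right (ω : ℝ → ℝ → ℝ) (a : ℝ) (P Q : Polynomial ℝ) :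
    Bpair ω P (Polynomial.C a * Q) = a * Bpair ω P Q := by
  rw [Bpair, Bpair, ← integral_const_mul]
  congr 1; funext z; simp; ring

lemma Bpair_sum {ι : Type*} (ω : ℝ → ℝ → ℝ)
    (hint : ∀ P Q : Polynomial ℝ,
      Integrable (fun z : ℝ × ℝ => P.eval z.1 * Q.eval z.2 * ω z.1 z.2))
    (s : Finset ι) (f : ι → Polynomial ℝ) (Q : Polynomial ℝ) :
    Bpair ω (∑ j ∈ s, f j) Q = ∑ j ∈ s, Bpair ω (f j) Q := by
  classical
  induction s using Finset.induction_on with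
  | empty => simp [Bpair_zero]
  | insert _ _ hx ih =>
    rw [Finset.sum_insert hx, Finset.sum_insert hx, Bpair_add ω hint, ih]

lemma orth_aux (ω : ℝ → ℝ → ℝ)
    (hint : ∀ P Q : Polynomial ℝ,
      Integrable (fun z : ℝ × ℝ => P.eval z.1 * Q.eval z.2 * ω z.1 z.2))
    (p q : ℕ → Polynomial ℝ) (hsq : ℕ → ℝ) (n : ℕ)
    (hqm : ∀ j, (q j).Monic) (hqd : ∀ j, (q j).natDegree = j)
    (hbiB : ∀ i j, Bpair ω (p i) (q j) = if i = j then hsq i else 0)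
    (m : ℕ) (hm : n ≤ m) :
    ∀ Q : Polynomial ℝ, Q.degree < (n : WithBot ℕ) → Bpair ω (p m) Q = 0 := by
  suffices H : ∀ d : ℕ, ∀ Q : Polynomial ℝ, Q.natDegree < d →
      Q.degree < (n : WithBot ℕ) → Bpair ω (p m) Q = 0 by
    intro Q hQ; exact H (Q.natDegree + 1) Q (Nat.lt_succ_self _) hQ
  intro d
  induction d with
  | zero => intro Q h; omega
  | succ d ih =>
    intro Q hQd hQdeg
    by_cases hQ0 : Q = 0
    · rw [hQ0]; exact Bpair_zero_right ω (p m)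
    set k := Q.natDegree with hk
    have hdegQ : Q.degree = (k : WithBot ℕ) := Polynomial.degree_eq_natDegree hQ0
    have hkn : k < n := by
      rw [hdegQ] at hQdeg; exact_mod_cast hQdeg
    set Q' := Q - Polynomial.C Q.leadingCoeff * q k with hQ'
    have hlcne : Q.leadingCoeff ≠ 0 := Polynomial.leadingCoeff_ne_zero.mpr hQ0
    have hdegqk : (q k).degree = (k : WithBot ℕ) := by
      rw [Polynomial.degree_eq_natDegree (hqm k).ne_zero, hqd k]
    have hdeg2 : (Polynomial.C Q.leadingCoeff * q k).degree = Q.degree := by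
      rw [Polynomial.degree_C_mul hlcne, hdegqk, hdegQ]
    have hlt : Q'.degree < Q.degree := by
      apply Polynomial.degree_sub_lt hdeg2.symm hQ0
      rw [Polynomial.leadingCoeff_mul, Polynomial.leadingCoeff_C, (hqm k).leadingCoeff, mul_one]
    have hsplit : Q = Q' + Polynomial.C Q.leadingCoeff * q k := by ring
    have hBqk : Bpair ω (p m) (q k) = 0 := by
      rw [hbiB m k, if_neg (by omega)]
    have hBQ' : Bpair ω (p m) Q' = 0 := by
      by_cases h0 : Q' = 0
      · rw [h0]; exact Bpair_zero_right ω (p m)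
      · apply ih Q'
        · have := Polynomial.natDegree_lt_natDegree h0 hlt
          omega
        · exact lt_trans hlt hQdeg
    rw [hsplit, Bpair_add_right ω hint, Bpair_Cmul_right, hBQ', hBqk, mul_zero, add_zero]

/-- Christoffel-type formula (Proposition 1): the monic biorthogonal polynomial of degree `n`
for the modified weight `w̃(x,y) = ∏ᵢ (x−xᵢ) · w(x,y)`, given as a ratio of determinants. -/
theorem stmt_6 (ω : ℝ → ℝ → ℝ) (p q : ℕ → Polynomial ℝ) (hsq : ℕ → ℝ) (n I : ℕ)
    (hpm : ∀ i, (p i).Monic) (hpd : ∀ i, (p i).natDegree = i)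
    (hqm : ∀ j, (q j).Monic) (hqd : ∀ j, (q j).natDegree = j)
    (hh : ∀ i, hsq i ≠ 0)
    (hint : ∀ P Q : Polynomial ℝ,
      Integrable (fun z : ℝ × ℝ => P.eval z.1 * Q.eval z.2 * ω z.1 z.2))
    (hbi : ∀ i j, (∫ x : ℝ, ∫ y : ℝ, (p i).eval x * (q j).eval y * ω x y)
      = if i = j then hsq i else 0)
    (xs : Fin I → ℝ) (hxs : Function.Injective xs)
    (D : ℝ) (hD : D = Matrix.det (Matrix.of fun i j : Fin I => (p (n + (j : ℕ))).eval (xs i)))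
    (hD0 : D ≠ 0)
    (wt : ℝ → ℝ → ℝ) (hwt : ∀ x y, wt x y = (∏ i : Fin I, (x - xs i)) * ω x y) :
    ∃ A : Polynomial ℝ, A.Monic ∧ A.natDegree = n ∧
      (∀ x : ℝ, (∀ i, x ≠ xs i) →
        A.eval x = (∏ i : Fin I, (x - xs i))⁻¹ *
          (Matrix.det (Matrix.of fun i j : Fin (I + 1) =>
            if h : (i : ℕ) < I then (p (n + (j : ℕ))).eval (xs ⟨i, h⟩)
            else (p (n + (j : ℕ))).eval x)) / D) ∧
      ∀ Q : Polynomial ℝ, Q.degree < n →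
        (∫ x : ℝ, ∫ y : ℝ, A.eval x * Q.eval y * wt x y) = 0 := by
  classical
  have hbiB : ∀ i j, Bpair ω (p i) (q j) = if i = j then hsq i else 0 := fun i j => by
    rw [← Bpair_eq_iter ω _ _ (hint _ _)]; exact hbi i j
  -- the polynomial-entry matrix
  set Mat : Matrix (Fin (I + 1)) (Fin (I + 1)) (Polynomial ℝ) :=
    Matrix.of fun i j => if h : (i : ℕ) < I then Polynomial.C ((p (n + (j : ℕ))).eval (xs ⟨i, h⟩))
      else p (n + (j : ℕ)) with hMat
  set Mp : Polynomial ℝ := Mat.det with hMpdef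
  -- evaluation of Mp
  have heval : ∀ x : ℝ, Mp.eval x = Matrix.det (Matrix.of fun i j : Fin (I + 1) =>
      if h : (i : ℕ) < I then (p (n + (j : ℕ))).eval (xs ⟨i, h⟩)
      else (p (n + (j : ℕ))).eval x) := by
    intro x
    have h1 : Mp.eval x = ((Polynomial.evalRingHom x).mapMatrix Mat).det :=
      RingHom.map_det (Polynomial.evalRingHom x) Mat
    rw [h1]
    congr 1
    ext i j
    by_cases h : (i : ℕ) < I <;>
      simp [hMat, h, RingHom.mapMatrix_apply, Matrix.map_apply]
  -- roots at the xs
  have hroot : ∀ k : Fin I, Mp.eval (xs k) = 0 := by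
    intro k
    rw [heval]
    apply Matrix.det_zero_of_row_eq (i := (⟨(k : ℕ), by omega⟩ : Fin (I + 1)))
      (j := Fin.last I)
    · intro hcon
      have : (k : ℕ) = I := by simpa using congrArg Fin.val hcon
      omega
    · funext j
      have hkI : (k : ℕ) < I := k.isLt
      simp [hkI]
  -- Laplace expansion along the last row
  have hlastrow : ∀ j : Fin (I + 1), Mat (Fin.last I) j = p (n + (j : ℕ)) := fun j => by
    simp [hMat]
  set sm : Fin (I + 1) → Matrix (Fin I) (Fin I) ℝ :=
    fun j => Matrix.of fun a b => (p (n + ((j.succAbove b : Fin (I + 1)) : ℕ))).eval (xs a)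
    with hsm
  have hminor : ∀ j : Fin (I + 1),
      (Mat.submatrix (Fin.last I).succAbove j.succAbove).det
        = Polynomial.C ((sm j).det) := by
    intro j
    rw [RingHom.map_det (Polynomial.C : ℝ →+* Polynomial ℝ) (sm j)]
    congr 1
    ext a b
    have h1 : (Fin.last I).succAbove a = a.castSucc := by
      rw [Fin.succAbove_last]
    have h2 : ((a.castSucc : Fin (I + 1)) : ℕ) < I := by simp
    simp [Matrix.submatrix_apply, h1, hMat, h2, hsm, RingHom.mapMatrix_apply,
      Matrix.map_apply]
  set cs : Fin (I + 1) → ℝ := fun j => (-1 : ℝ) ^ (I + (j : ℕ)) * (sm j).det with hcs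
  have hMpsum : Mp = ∑ j : Fin (I + 1), Polynomial.C (cs j) * p (n + (j : ℕ)) := by
    rw [hMpdef, Matrix.det_succ_row Mat (Fin.last I)]
    refine Finset.sum_congr rfl fun j _ => ?_
    rw [hlastrow j, hminor j]
    simp only [hcs, map_mul, map_pow, map_neg, map_one, Fin.val_last]
    ring
  -- the last coefficient is D
  have hcslast : cs (Fin.last I) = D := by
    have h1 : ((-1 : ℝ)) ^ (I + ((Fin.last I : Fin (I + 1)) : ℕ)) = 1 := by
      rw [Fin.val_last]; exact Even.neg_one_pow ⟨I, rfl⟩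
    rw [hD]
    show (-1 : ℝ) ^ (I + ((Fin.last I : Fin (I + 1)) : ℕ)) * (sm (Fin.last I)).det = _
    rw [h1, one_mul]
    congr 1
    ext a b
    have : (Fin.last I).succAbove b = b.castSucc := by rw [Fin.succAbove_last]
    simp [hsm, this]
  have hcoeff : Mp.coeff (n + I) = D := by
    rw [hMpsum, Polynomial.finset_sum_coeff]
    rw [Finset.sum_eq_single (Fin.last I)]
    · rw [Polynomial.coeff_C_mul, hcslast, Fin.val_last]
      have hc1 : (p (n + I)).coeff (n + I) = 1 := by
        have := (hpm (n + I)).coeff_natDegree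
        rwa [hpd] at this
      rw [hc1, mul_one]
    · intro j _ hj
      have hjI : (j : ℕ) < I := Fin.val_lt_last hj
      rw [Polynomial.coeff_C_mul, Polynomial.coeff_eq_zero_of_natDegree_lt, mul_zero]
      rw [hpd]; omega
    · simp
  have hMpne : Mp ≠ 0 := fun hc => hD0 (by rw [← hcoeff, hc, Polynomial.coeff_zero])
  have hdegle : Mp.natDegree ≤ n + I := by
    rw [hMpsum]
    apply Polynomial.natDegree_sum_le_of_forall_le
    intro j _
    refine le_trans (Polynomial.natDegree_C_mul_le _ _) ?_
    rw [hpd]; omega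
  have hdegMp : Mp.natDegree = n + I :=
    le_antisymm hdegle (Polynomial.le_natDegree_of_ne_zero (by rw [hcoeff]; exact hD0))
  have hlcMp : Mp.leadingCoeff = D := by
    rw [Polynomial.leadingCoeff, hdegMp, hcoeff]
  -- the product polynomial divides Mp
  set Pr : Polynomial ℝ := ∏ i : Fin I, (Polynomial.X - Polynomial.C (xs i)) with hPr
  have hPrm : Pr.Monic := monic_prod_of_monic _ _ fun i _ => monic_X_sub_C _
  have hPrdeg : Pr.natDegree = I := by
    rw [hPr, Polynomial.natDegree_prod _ _ (fun i _ => (monic_X_sub_C (xs i)).ne_zero)]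
    simp
  have hPreval : ∀ x : ℝ, Pr.eval x = ∏ i : Fin I, (x - xs i) := by
    intro x; rw [hPr, Polynomial.eval_prod]; simp
  have hdvd : Pr ∣ Mp := by
    rw [hPr]
    apply Finset.prod_dvd_of_coprime
    · exact (Polynomial.pairwise_coprime_X_sub_C hxs).set_pairwise _
    · intro i _
      exact Polynomial.dvd_iff_isRoot.mpr (hroot i)
  obtain ⟨R, hRdef⟩ := hdvd
  have hRne : R ≠ 0 := fun hc => hMpne (by rw [hRdef, hc, mul_zero])
  have hdegR : R.natDegree = n := by
    have h2 := Polynomial.natDegree_mul hPrm.ne_zero hRne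
    rw [← hRdef, hdegMp, hPrdeg] at h2; omega
  have hlcR : R.leadingCoeff = D := by
    have h2 := Polynomial.leadingCoeff_mul Pr R
    rw [← hRdef, hPrm.leadingCoeff, one_mul] at h2
    rw [← h2, hlcMp]
  refine ⟨Polynomial.C D⁻¹ * R, ?_, ?_, ?_, ?_⟩
  · show (Polynomial.C D⁻¹ * R).leadingCoeff = 1
    rw [Polynomial.leadingCoeff_mul, Polynomial.leadingCoeff_C, hlcR]
    field_simp
  · rw [Polynomial.natDegree_C_mul (inv_ne_zero hD0), hdegR]
  · intro x hx
    have hprodne : (∏ i : Fin I, (x - xs i)) ≠ 0 :=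
      Finset.prod_ne_zero_iff.mpr fun i _ => sub_ne_zero.mpr (hx i)
    have hMx : Mp.eval x = (∏ i : Fin I, (x - xs i)) * R.eval x := by
      rw [hRdef, Polynomial.eval_mul, hPreval]
    rw [Polynomial.eval_mul, Polynomial.eval_C, ← heval x, hMx]
    field_simp
  · intro Q hQ
    have key : ∀ x y : ℝ, (Polynomial.C D⁻¹ * R).eval x * Q.eval y * wt x y
        = (Polynomial.C D⁻¹ * Mp).eval x * Q.eval y * ω x y := by
      intro x y
      rw [hwt, hRdef, Polynomial.eval_mul, Polynomial.eval_mul, Polynomial.eval_mul,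
        Polynomial.eval_C, hPreval]
      ring
    calc (∫ x : ℝ, ∫ y : ℝ, (Polynomial.C D⁻¹ * R).eval x * Q.eval y * wt x y)
        = ∫ x : ℝ, ∫ y : ℝ, (Polynomial.C D⁻¹ * Mp).eval x * Q.eval y * ω x y := by
          simp_rw [key]
      _ = Bpair ω (Polynomial.C D⁻¹ * Mp) Q := Bpair_eq_iter ω _ _ (hint _ _)
      _ = D⁻¹ * Bpair ω Mp Q := Bpair_Cmul ω _ _ _
      _ = 0 := by
          rw [hMpsum, Bpair_sum ω hint]
          have hz : ∀ j : Fin (I + 1),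
              Bpair ω (Polynomial.C (cs j) * p (n + (j : ℕ))) Q = 0 := by
            intro j
            rw [Bpair_Cmul ω,
              orth_aux ω hint p q hsq n hqm hqd hbiB (n + (j : ℕ)) (Nat.le_add_right _ _) Q hQ,
              mul_zero]
          rw [Finset.sum_congr rfl fun j _ => hz j]
          simp
end

section
/- Under the determinantal eigenvalue density of the two-matrix model, the average of the product of characteristic polynomials of both matrices evaluated at x and y equals h_n² K̃_{1,2}^{(n+1)}(x,y), i.e. E[∏_{m=1}^n (x−λ_m)(y−μ_m)] = h_n² Σ_{i=0}^{n} h_i^{-2} p_i(x) q_i(y) = Σ_{i=0}^{n} (h_n²/h_i²) p_i(x) q_i(y). -/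
open MeasureTheory Polynomial

namespace Stmt19Aux
open Filter Real

noncomputable def sgnR {N : ℕ} (σ : Equiv.Perm (Fin N)) : ℝ :=
  ((Equiv.Perm.sign σ : ℤ) : ℝ)

lemma sgnR_mul {N : ℕ} (σ ρ : Equiv.Perm (Fin N)) : sgnR (σ * ρ) = sgnR σ * sgnR ρ := by
  simp [sgnR]

lemma sgnR_inv {N : ℕ} (σ : Equiv.Perm (Fin N)) : sgnR σ⁻¹ = sgnR σ := by
  simp [sgnR]

lemma sgnR_sq {N : ℕ} (σ : Equiv.Perm (Fin N)) : sgnR σ * sgnR σ = 1 := by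
  simp [sgnR, ← Int.cast_mul, ← Units.val_mul]

/-- determinant as a signed sum over permutations, real version -/
lemma det_eq_sum_perm {N : ℕ} (M : Matrix (Fin N) (Fin N) ℝ) :
    M.det = ∑ σ : Equiv.Perm (Fin N), sgnR σ * ∏ i, M (σ i) i := by
  rw [Matrix.det_apply]
  refine Finset.sum_congr rfl fun σ _ => ?_
  simp [sgnR, Units.smul_def, zsmul_eq_mul]

/-- transposed version -/
lemma det_eq_sum_perm' {N : ℕ} (M : Matrix (Fin N) (Fin N) ℝ) :
    M.det = ∑ σ : Equiv.Perm (Fin N), sgnR σ * ∏ i, M i (σ i) := by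
  rw [← Matrix.det_transpose, det_eq_sum_perm]
  rfl

/-- product of two dets with entries sampled at common nodes, as a double permutation sum -/
lemma det_mul_det_eq_sum {N : ℕ} (f g : Fin N → ℝ → ℝ) (m : Fin N → ℝ) :
    (Matrix.of fun i j : Fin N => f j (m i)).det *
      (Matrix.of fun i j : Fin N => g j (m i)).det
    = ∑ σ : Equiv.Perm (Fin N), ∑ ρ : Equiv.Perm (Fin N),
        (sgnR σ * sgnR ρ) * ∏ j, (f (σ⁻¹ j) (m j) * g (ρ⁻¹ j) (m j)) := by
  rw [det_eq_sum_perm, det_eq_sum_perm, Finset.sum_mul_sum]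
  refine Finset.sum_congr rfl fun σ _ => Finset.sum_congr rfl fun ρ _ => ?_
  have h1 : (∏ i, (Matrix.of fun i j : Fin N => f j (m i)) (σ i) i)
      = ∏ j, f (σ⁻¹ j) (m j) := by
    rw [← Equiv.prod_comp σ (fun j => f (σ⁻¹ j) (m j))]
    simp
  have h2 : (∏ i, (Matrix.of fun i j : Fin N => g j (m i)) (ρ i) i)
      = ∏ j, g (ρ⁻¹ j) (m j) := by
    rw [← Equiv.prod_comp ρ (fun j => g (ρ⁻¹ j) (m j))]
    simp
  rw [h1, h2, Finset.prod_mul_distrib]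
  ring

/-- the permutation-sum form of `N ! * det` -/
lemma perm_sum_det {N : ℕ} (D : Fin N → Fin N → ℝ) :
    (∑ σ : Equiv.Perm (Fin N), ∑ ρ : Equiv.Perm (Fin N),
        (sgnR σ * sgnR ρ) * ∏ j, D (σ⁻¹ j) (ρ⁻¹ j))
      = (N.factorial : ℝ) * (Matrix.of fun a b : Fin N => D a b).det := by
  have key : ∀ σ : Equiv.Perm (Fin N),
      (∑ ρ : Equiv.Perm (Fin N), (sgnR σ * sgnR ρ) * ∏ j, D (σ⁻¹ j) (ρ⁻¹ j))
        = (Matrix.of fun a b : Fin N => D a b).det := by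
    intro σ
    have hprod : ∀ ρ : Equiv.Perm (Fin N),
        (∏ j, D (σ⁻¹ j) (ρ⁻¹ j)) = ∏ j, D j ((ρ⁻¹ * σ) j) := by
      intro ρ
      rw [← Equiv.prod_comp σ (fun j => D (σ⁻¹ j) (ρ⁻¹ j))]
      simp [Equiv.Perm.mul_apply]
    simp_rw [hprod]
    -- reindex ρ ↦ μ := ρ⁻¹ * σ
    have := Fintype.sum_equiv
      ((Equiv.inv (Equiv.Perm (Fin N))).trans (Equiv.mulRight σ))
      (fun ρ : Equiv.Perm (Fin N) => (sgnR σ * sgnR ρ) * ∏ j, D j ((ρ⁻¹ * σ) j))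
      (fun μ : Equiv.Perm (Fin N) => sgnR μ * ∏ j, D j (μ j))
      ?_
    · rw [this, det_eq_sum_perm']
      rfl
    · intro ρ
      simp only [Equiv.trans_apply, Equiv.inv_apply, Equiv.coe_mulRight]
      have : sgnR (ρ⁻¹ * σ) = sgnR ρ * sgnR σ := by
        rw [sgnR_mul, sgnR_inv]
      rw [this]
      have hsq := sgnR_sq σ
      nlinarith [hsq]
  simp_rw [key]
  rw [Finset.sum_const, Finset.card_univ, Fintype.card_perm, Fintype.card_fin, nsmul_eq_mul]

lemma det_det_integrable {N : ℕ} (f g : Fin N → ℝ → ℝ)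
    (hfg : ∀ a b, Integrable fun t : ℝ => f a t * g b t) :
    Integrable (fun m : Fin N → ℝ => (Matrix.of fun i j : Fin N => f j (m i)).det *
      (Matrix.of fun i j : Fin N => g j (m i)).det) := by
  have heq : (fun m : Fin N → ℝ => (Matrix.of fun i j : Fin N => f j (m i)).det *
      (Matrix.of fun i j : Fin N => g j (m i)).det)
      = fun m => ∑ σ : Equiv.Perm (Fin N), ∑ ρ : Equiv.Perm (Fin N),
        (sgnR σ * sgnR ρ) *
          ∏ j, (f (σ⁻¹ j) (m j) * g (ρ⁻¹ j) (m j)) := funext (det_mul_det_eq_sum f g)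
  rw [heq]
  refine integrable_finset_sum _ (fun σ _ => integrable_finset_sum _ (fun ρ _ => ?_))
  exact (Integrable.fintype_prod (𝕜 := ℝ)
    (f := fun j t => f (σ⁻¹ j) t * g (ρ⁻¹ j) t) (fun j => hfg _ _)).const_mul _

lemma andreief {N : ℕ} (f g : Fin N → ℝ → ℝ)
    (hfg : ∀ a b, Integrable fun t : ℝ => f a t * g b t) :
    (∫ m : Fin N → ℝ, (Matrix.of fun i j : Fin N => f j (m i)).det *
        (Matrix.of fun i j : Fin N => g j (m i)).det)
      = (N.factorial : ℝ) * (Matrix.of fun a b : Fin N => ∫ t : ℝ, f a t * g b t).det := by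
  simp_rw [det_mul_det_eq_sum f g]
  rw [integral_finset_sum _ (fun σ _ => integrable_finset_sum _ (fun ρ _ =>
    (Integrable.fintype_prod (𝕜 := ℝ) (f := fun j t => f (σ⁻¹ j) t * g (ρ⁻¹ j) t)
      (fun j => hfg _ _)).const_mul _))]
  rw [← perm_sum_det (fun a b => ∫ t : ℝ, f a t * g b t)]
  refine Finset.sum_congr rfl fun σ _ => ?_
  rw [integral_finset_sum _ (fun ρ _ =>
    (Integrable.fintype_prod (𝕜 := ℝ) (f := fun j t => f (σ⁻¹ j) t * g (ρ⁻¹ j) t)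
      (fun j => hfg _ _)).const_mul _)]
  refine Finset.sum_congr rfl fun ρ _ => ?_
  rw [integral_const_mul]
  congr 1
  exact MeasureTheory.integral_fintype_prod_eq_prod
    (f := fun j t => f (σ⁻¹ j) t * g (ρ⁻¹ j) t)

lemma double_andreief {N : ℕ} (ω : ℝ → ℝ → ℝ)
    (hint1 : ∀ (Q : Polynomial ℝ) (s : ℝ), Integrable fun t : ℝ => Q.eval t * ω s t)
    (hint3 : ∀ P Q : Polynomial ℝ, Integrable fun s : ℝ => P.eval s * ∫ t : ℝ, Q.eval t * ω s t)
    (P Q : Fin N → Polynomial ℝ) :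
    (∫ l : Fin N → ℝ, ∫ m : Fin N → ℝ,
        (Matrix.of fun i j : Fin N => (P j).eval (l i)).det *
        ((Matrix.of fun i j : Fin N => (Q j).eval (m i)).det *
         (Matrix.of fun i j : Fin N => ω (l i) (m j)).det))
      = (N.factorial : ℝ) * (N.factorial : ℝ) *
        (Matrix.of fun a b : Fin N =>
          ∫ s : ℝ, (P a).eval s * ∫ t : ℝ, (Q b).eval t * ω s t).det := by
  have hstep1 : ∀ l : Fin N → ℝ,
      (∫ m : Fin N → ℝ, (Matrix.of fun i j : Fin N => (Q j).eval (m i)).det *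
         (Matrix.of fun i j : Fin N => ω (l i) (m j)).det)
      = (N.factorial : ℝ) *
          (Matrix.of fun i j : Fin N => ∫ t : ℝ, (Q j).eval t * ω (l i) t).det := by
    intro l
    have htr : ∀ m : Fin N → ℝ, (Matrix.of fun i j : Fin N => ω (l i) (m j)).det
        = (Matrix.of fun i j : Fin N => (fun (j : Fin N) (t : ℝ) => ω (l j) t) j (m i)).det := by
      intro m
      rw [← Matrix.det_transpose (Matrix.of fun i j : Fin N => ω (l i) (m j))]
      rfl
    simp_rw [htr]
    rw [andreief (fun a t => (Q a).eval t) (fun b t => ω (l b) t)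
      (fun a b => hint1 (Q a) (l b))]
    congr 1
    rw [← Matrix.det_transpose
      (Matrix.of fun a b : Fin N => ∫ t : ℝ, (Q a).eval t * ω (l b) t)]
    rfl
  have hstep2 : (fun l : Fin N → ℝ => ∫ m : Fin N → ℝ,
      (Matrix.of fun i j : Fin N => (P j).eval (l i)).det *
        ((Matrix.of fun i j : Fin N => (Q j).eval (m i)).det *
         (Matrix.of fun i j : Fin N => ω (l i) (m j)).det))
      = fun l => (N.factorial : ℝ) *
          ((Matrix.of fun i j : Fin N => (P j).eval (l i)).det *
           (Matrix.of fun i j : Fin N =>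
             (fun (b : Fin N) (s : ℝ) => ∫ t : ℝ, (Q b).eval t * ω s t) j (l i)).det) := by
    funext l
    rw [integral_const_mul, hstep1 l]
    ring
  rw [hstep2, integral_const_mul,
    andreief (fun a s => (P a).eval s)
      (fun b s => ∫ t : ℝ, (Q b).eval t * ω s t) (fun a b => hint3 (P a) (Q b))]
  ring

lemma bdd_below_of_tendsto {f : ℝ → ℝ} (hc : Continuous f)
    (h1 : Tendsto f atTop atTop) (h2 : Tendsto f atBot atTop) :
    ∃ C : ℝ, ∀ s, -C ≤ f s := by
  obtain ⟨M, hM⟩ := eventually_atTop.1 (h1.eventually_ge_atTop 0)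
  obtain ⟨M', hM'⟩ := eventually_atBot.1 (h2.eventually_ge_atTop 0)
  rcases le_or_gt M' M with h | h
  · obtain ⟨z, hz, hmin⟩ := (isCompact_Icc (a := M') (b := M)).exists_isMinOn
      (Set.nonempty_Icc.2 h) hc.continuousOn
    refine ⟨max 0 (-f z), fun s => ?_⟩
    rcases le_total s M' with hs | hs
    · have := hM' s hs
      have : -(max 0 (-f z)) ≤ 0 := by simp
      linarith [hM' s hs]
    rcases le_total M s with hs2 | hs2
    · have : -(max 0 (-f z)) ≤ 0 := by simp
      linarith [hM s hs2]
    · have hfz : f z ≤ f s := hmin (Set.mem_Icc.2 ⟨hs, hs2⟩)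
      have : -(max 0 (-f z)) ≤ f z := by
        have := le_max_right 0 (-f z)
        linarith
      linarith
  · refine ⟨0, fun s => ?_⟩
    rcases le_total s M' with hs | hs
    · simpa using hM' s hs
    · simpa using hM s (le_trans h.le hs)

lemma even_poly_tendsto_atBot (R : Polynomial ℝ) (hEv : Even R.natDegree)
    (hdeg : 0 < R.natDegree) (hl : 0 < R.leadingCoeff) :
    Tendsto (fun s : ℝ => R.eval s) atBot atTop := by
  set S := R.comp (-Polynomial.X) with hS
  have hSdeg : S.natDegree = R.natDegree := by
    rw [hS, natDegree_comp]
    simp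
  have hSl : S.leadingCoeff = R.leadingCoeff := by
    rw [hS, leadingCoeff_comp (by simp)]
    simp [hEv.neg_one_pow]
  have hTop : Tendsto (fun s : ℝ => S.eval s) atTop atTop := by
    apply tendsto_atTop_of_leadingCoeff_nonneg
    · rw [natDegree_pos_iff_degree_pos] at hdeg
      rwa [degree_eq_natDegree (fun h0 => by simp [h0] at hSl; simp [← hSl] at hl),
        hSdeg, ← degree_eq_natDegree (fun h0 => by simp [h0] at hl)]
      -- messy; fix below if needed
    · rw [hSl]; exact hl.le
  have hev : ∀ s : ℝ, S.eval s = R.eval (-s) := by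
    intro s; rw [hS, eval_comp]; simp
  have : Tendsto (fun s : ℝ => R.eval (-s)) atTop atTop := by
    simpa [hev] using hTop
  have := this.comp tendsto_neg_atBot_atTop
  simpa [Function.comp_def, neg_neg] using this

lemma poly_bdd_below (R : Polynomial ℝ) (hEv : Even R.natDegree) (hl : 0 < R.leadingCoeff) :
    ∃ C : ℝ, ∀ s, -C ≤ R.eval s := by
  rcases Nat.eq_zero_or_pos R.natDegree with h0 | h0
  · refine ⟨-R.coeff 0, fun s => ?_⟩
    conv_rhs => rw [Polynomial.eq_C_of_natDegree_eq_zero h0]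
    simp
  · refine bdd_below_of_tendsto (R.continuous) ?_ (even_poly_tendsto_atBot R hEv h0 hl)
    apply tendsto_atTop_of_leadingCoeff_nonneg _ _ hl.le
    rwa [← natDegree_pos_iff_degree_pos]

lemma poly_ge_quadratic (R : Polynomial ℝ) (hEv : Even R.natDegree) (hl : 0 < R.leadingCoeff)
    {K : ℝ} (hK : 0 < K) (hcase : 4 ≤ R.natDegree ∨ (R.natDegree = 2 ∧ K < R.leadingCoeff)) :
    ∃ C : ℝ, ∀ s, K * s ^ 2 - C ≤ R.eval s := by
  set S := R - Polynomial.C K * Polynomial.X ^ 2 with hS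
  have hX2 : (Polynomial.C K * Polynomial.X ^ 2 : Polynomial ℝ).natDegree = 2 := by
    rw [natDegree_C_mul (ne_of_gt hK), natDegree_X_pow]
  have hSeval : ∀ s, S.eval s = R.eval s - K * s ^ 2 := by
    intro s; simp [hS]
  have key : Even S.natDegree ∧ 0 < S.leadingCoeff := by
    rcases hcase with h4 | ⟨h2, hKl⟩
    · have hlt : (Polynomial.C K * Polynomial.X ^ 2 : Polynomial ℝ).natDegree < R.natDegree := by
        omega
      have hdeg : S.natDegree = R.natDegree := natDegree_sub_eq_left_of_natDegree_lt hlt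
      constructor
      · rw [hdeg]; exact hEv
      · have : S.leadingCoeff = R.leadingCoeff := by
          rw [Polynomial.leadingCoeff, hdeg, hS]
          rw [coeff_sub]
          have : (Polynomial.C K * Polynomial.X ^ 2 : Polynomial ℝ).coeff R.natDegree = 0 := by
            rw [coeff_C_mul, coeff_X_pow, if_neg (by omega)]
            ring
          rw [this, sub_zero, Polynomial.leadingCoeff]
        rw [this]
        exact hl
    · have hc2 : S.coeff 2 = R.leadingCoeff - K := by
        rw [hS, coeff_sub, coeff_C_mul, coeff_X_pow, if_pos rfl, mul_one,
          Polynomial.leadingCoeff, h2]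
      have hc2pos : 0 < S.coeff 2 := by rw [hc2]; linarith
      have hdle : S.natDegree ≤ 2 := by
        refine le_trans (natDegree_sub_le _ _) ?_
        simp [h2, hX2]
      have hdeg : S.natDegree = 2 :=
        le_antisymm hdle (le_natDegree_of_ne_zero (by exact ne_of_gt hc2pos))
      exact ⟨by rw [hdeg]; exact ⟨1, rfl⟩, by rwa [Polynomial.leadingCoeff, hdeg]⟩
  obtain ⟨C, hC⟩ := poly_bdd_below S key.1 key.2
  exact ⟨C, fun s => by have := hC s; rw [hSeval s] at this; linarith⟩

lemma integrable_poly_gauss (Q : Polynomial ℝ) {δ : ℝ} (hδ : 0 < δ) :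
    Integrable fun t : ℝ => |Q.eval t| * Real.exp (-δ * t ^ 2) := by
  have hintk : ∀ k : ℕ, Integrable fun t : ℝ => |t| ^ k * Real.exp (-δ * t ^ 2) := by
    intro k
    have h0 := integrable_rpow_mul_exp_neg_mul_sq hδ (s := (k : ℝ))
      (lt_of_lt_of_le neg_one_lt_zero (Nat.cast_nonneg k))
    have h1 : Integrable fun t : ℝ => |t ^ k * Real.exp (-δ * t ^ 2)| := by
      apply Integrable.abs
      have heq : (fun t : ℝ => t ^ (k : ℝ) * Real.exp (-δ * t ^ 2))
          = fun t : ℝ => t ^ k * Real.exp (-δ * t ^ 2) := by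
        funext t; rw [Real.rpow_natCast]
      rwa [heq] at h0
    have heq2 : (fun t : ℝ => |t ^ k * Real.exp (-δ * t ^ 2)|)
        = fun t : ℝ => |t| ^ k * Real.exp (-δ * t ^ 2) := by
      funext t; rw [abs_mul, abs_pow, abs_of_pos (Real.exp_pos _)]
    rwa [heq2] at h1
  have hint : Integrable fun t : ℝ => ∑ k ∈ Finset.range (Q.natDegree + 1),
      |Q.coeff k| * (|t| ^ k * Real.exp (-δ * t ^ 2)) :=
    integrable_finset_sum _ (fun k _ => (hintk k).const_mul _)
  apply hint.mono' (Continuous.aestronglyMeasurable (by fun_prop))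
  filter_upwards with t
  rw [Real.norm_eq_abs, abs_mul, abs_abs, abs_of_pos (Real.exp_pos _)]
  have hb : |Q.eval t| ≤ ∑ k ∈ Finset.range (Q.natDegree + 1), |Q.coeff k| * |t| ^ k := by
    rw [eval_eq_sum_range]
    refine (Finset.abs_sum_le_sum_abs _ _).trans ?_
    apply Finset.sum_le_sum
    intro k _
    rw [abs_mul, abs_pow]
  calc |Q.eval t| * Real.exp (-δ * t ^ 2)
      ≤ (∑ k ∈ Finset.range (Q.natDegree + 1), |Q.coeff k| * |t| ^ k) * Real.exp (-δ * t ^ 2) :=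
        mul_le_mul_of_nonneg_right hb (Real.exp_nonneg _)
    _ = _ := by rw [Finset.sum_mul]; refine Finset.sum_congr rfl fun k _ => by ring

lemma not_integrable_of_ge {f : ℝ → ℝ} {c : ℝ} (hc : 0 < c) (S : Set ℝ)
    (hS : volume S = ⊤) (hmeas : MeasurableSet S) (h : ∀ s ∈ S, c ≤ f s) :
    ¬ Integrable f := fun hf => by
  have h1 : IntegrableOn (fun _ : ℝ => c) S := by
    apply Integrable.mono' hf.integrableOn aestronglyMeasurable_const
    filter_upwards [ae_restrict_mem hmeas] with s hs
    rw [Real.norm_eq_abs, abs_of_pos hc]; exact h s hs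
  rw [integrableOn_const_iff] at h1
  rcases h1 with h1 | h1
  · exact hc.ne' (enorm_eq_zero.1 h1)
  · rw [hS] at h1; exact lt_irrefl _ h1

lemma integral_exp_quadratic (b : ℝ) (hb : 0 < b) (u E : ℝ) :
    (∫ t : ℝ, Real.exp (-(b * (t - u) ^ 2) + E)) = Real.sqrt (π / b) * Real.exp E := by
  simp_rw [Real.exp_add]
  rw [integral_mul_const]
  congr 1
  rw [integral_sub_right_eq_self (fun t : ℝ => Real.exp (-(b * t ^ 2))) u]
  simpa [neg_mul] using integral_gaussian b

/-- one-sided case: `4 ≤ deg V`, `2 ≤ deg W`. -/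
lemma bound_case_A (V W : Polynomial ℝ) (τ : ℝ)
    (hVe : Even V.natDegree) (hVl : 0 < V.leadingCoeff) (hV4 : 4 ≤ V.natDegree)
    (hWe : Even W.natDegree) (hWd : 0 < W.natDegree) (hWl : 0 < W.leadingCoeff) :
    ∃ δ C : ℝ, 0 < δ ∧ ∀ s t : ℝ, -V.eval s - W.eval t + τ * s * t ≤ C - δ * (s ^ 2 + t ^ 2) := by
  set b := W.leadingCoeff with hb
  have hW2 : 4 ≤ W.natDegree ∨ W.natDegree = 2 := by
    rcases hWe with ⟨k, hk⟩; omega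
  obtain ⟨Cw, hCw⟩ := poly_ge_quadratic W hWe hWl (K := b / 2) (by positivity)
    (by rcases hW2 with h | h
        · exact Or.inl h
        · exact Or.inr ⟨h, by rw [← hb]; linarith⟩)
  obtain ⟨Cv, hCv⟩ := poly_ge_quadratic V hVe hVl (K := τ ^ 2 / b + 1) (by positivity)
    (Or.inl hV4)
  refine ⟨min 1 (b / 4), Cv + Cw, lt_min one_pos (by positivity), fun s t => ?_⟩
  have h1 := hCv s
  have h2 := hCw t
  have hcross : τ * s * t ≤ b / 4 * t ^ 2 + τ ^ 2 / b * s ^ 2 := by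
    have hid : b / 4 * t ^ 2 + τ ^ 2 / b * s ^ 2 - τ * s * t
        = (b / 2 * t - τ * s) ^ 2 / b := by
      field_simp
      ring
    have h0 : 0 ≤ (b / 2 * t - τ * s) ^ 2 / b := div_nonneg (sq_nonneg _) hWl.le
    linarith [hid ▸ h0]
  have hm1 : min 1 (b / 4) * s ^ 2 ≤ 1 * s ^ 2 :=
    mul_le_mul_of_nonneg_right (min_le_left _ _) (sq_nonneg s)
  have hm2 : min 1 (b / 4) * t ^ 2 ≤ b / 4 * t ^ 2 :=
    mul_le_mul_of_nonneg_right (min_le_right _ _) (sq_nonneg t)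
  nlinarith [sq_nonneg s, sq_nonneg t]

lemma master_bound (V W : Polynomial ℝ) (τ : ℝ)
    (hVe : Even V.natDegree) (hVd : 0 < V.natDegree) (hVl : 0 < V.leadingCoeff)
    (hWe : Even W.natDegree) (hWd : 0 < W.natDegree) (hWl : 0 < W.leadingCoeff)
    (ω : ℝ → ℝ → ℝ) (hω : ∀ x y, ω x y = Real.exp (-V.eval x - W.eval y + τ * x * y))
    (h00 : (∫ s : ℝ, ∫ t : ℝ, ω s t) ≠ 0) :
    ∃ δ C : ℝ, 0 < δ ∧ ∀ s t : ℝ, -V.eval s - W.eval t + τ * s * t ≤ C - δ * (s ^ 2 + t ^ 2) := by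
  have hV2 : 4 ≤ V.natDegree ∨ V.natDegree = 2 := by rcases hVe with ⟨k, hk⟩; omega
  have hW2 : 4 ≤ W.natDegree ∨ W.natDegree = 2 := by rcases hWe with ⟨k, hk⟩; omega
  rcases hV2 with hV4 | hVq
  · exact bound_case_A V W τ hVe hVl hV4 hWe hWd hWl
  rcases hW2 with hW4 | hWq
  · obtain ⟨δ, C, hδ, h⟩ := bound_case_A W V τ hWe hWl hW4 hVe hVd hVl
    refine ⟨δ, C, hδ, fun s t => ?_⟩
    have := h t s
    have hst : τ * t * s = τ * s * t := by ring
    rw [hst] at this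
    linarith [this]
  -- both quadratic
  set a := V.leadingCoeff with ha
  set b := W.leadingCoeff with hb
  have ha2 : V.coeff 2 = a := by rw [ha, Polynomial.leadingCoeff, hVq]
  have hb2 : W.coeff 2 = b := by rw [hb, Polynomial.leadingCoeff, hWq]
  have hVev : ∀ s : ℝ, V.eval s = V.coeff 0 + V.coeff 1 * s + a * s ^ 2 := by
    intro s
    rw [eval_eq_sum_range, hVq]
    simp [Finset.sum_range_succ, ha2]
    try ring
  have hWev : ∀ t : ℝ, W.eval t = W.coeff 0 + W.coeff 1 * t + b * t ^ 2 := by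
    intro t
    rw [eval_eq_sum_range, hWq]
    simp [Finset.sum_range_succ, hb2]
    try ring
  by_cases hτ : τ ^ 2 < 4 * a * b
  · -- negative definite quadratic form
    set δ₀ := (4 * a * b - τ ^ 2) / (4 * (a + b)) with hδ₀
    have hab : 0 < a + b := by positivity
    have hδ₀pos : 0 < δ₀ := by
      apply div_pos (by linarith) (by linarith)
    have haδ : δ₀ < a := by
      rw [hδ₀, div_lt_iff₀ (by linarith)]
      nlinarith [sq_nonneg τ, sq_nonneg a]
    have hbδ : δ₀ < b := by
      rw [hδ₀, div_lt_iff₀ (by linarith)]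
      nlinarith [sq_nonneg τ, sq_nonneg b]
    have hkey : 4 * (a - δ₀) * (b - δ₀) = τ ^ 2 + 4 * δ₀ ^ 2 := by
      rw [hδ₀]
      field_simp
      ring
    have hquad : ∀ s t : ℝ, δ₀ * (s ^ 2 + t ^ 2) ≤ a * s ^ 2 + b * t ^ 2 - τ * s * t := by
      intro s t
      nlinarith [sq_nonneg (2 * (a - δ₀) * s - τ * t), sq_nonneg t, haδ, hbδ, hδ₀pos]
    refine ⟨δ₀ / 2,
      (V.coeff 1) ^ 2 / (2 * δ₀) + (W.coeff 1) ^ 2 / (2 * δ₀) - V.coeff 0 - W.coeff 0,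
      by positivity, fun s t => ?_⟩
    have h1 : -(V.coeff 1) * s ≤ δ₀ / 2 * s ^ 2 + (V.coeff 1) ^ 2 / (2 * δ₀) := by
      have hid : δ₀ / 2 * s ^ 2 + (V.coeff 1) ^ 2 / (2 * δ₀) + V.coeff 1 * s
          = (δ₀ * s + V.coeff 1) ^ 2 / (2 * δ₀) := by
        field_simp
        ring
      have h0 : 0 ≤ (δ₀ * s + V.coeff 1) ^ 2 / (2 * δ₀) :=
        div_nonneg (sq_nonneg _) (by positivity)
      linarith [hid ▸ h0]
    have h2 : -(W.coeff 1) * t ≤ δ₀ / 2 * t ^ 2 + (W.coeff 1) ^ 2 / (2 * δ₀) := by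
      have hid : δ₀ / 2 * t ^ 2 + (W.coeff 1) ^ 2 / (2 * δ₀) + W.coeff 1 * t
          = (δ₀ * t + W.coeff 1) ^ 2 / (2 * δ₀) := by
        field_simp
        ring
      have h0 : 0 ≤ (δ₀ * t + W.coeff 1) ^ 2 / (2 * δ₀) :=
        div_nonneg (sq_nonneg _) (by positivity)
      linarith [hid ▸ h0]
    have h3 := hquad s t
    rw [hVev s, hWev t]
    nlinarith [h1, h2, h3]
  · -- bad case: contradiction with h00
    exfalso
    push_neg at hτ
    set w1 := W.coeff 1
    set w0 := W.coeff 0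
    set v1 := V.coeff 1
    set v0 := V.coeff 0
    have hbpos : 0 < b := hWl
    have hfval : ∀ s : ℝ, (∫ t : ℝ, ω s t)
        = Real.sqrt (π / b) * Real.exp (-V.eval s + (τ * s - w1) ^ 2 / (4 * b) - w0) := by
      intro s
      have hexp : ∀ t : ℝ, ω s t
          = Real.exp (-(b * (t - (τ * s - w1) / (2 * b)) ^ 2)
              + (-V.eval s + (τ * s - w1) ^ 2 / (4 * b) - w0)) := by
        intro t
        rw [hω]
        congr 1
        rw [hWev t]
        field_simp
        ring
      simp_rw [hexp]
      exact integral_exp_quadratic b hbpos _ _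
    have hglb : ∀ s : ℝ, (-v1 - 2 * (τ * w1) / (4 * b)) * s + (w1 ^ 2 / (4 * b) - v0 - w0)
        ≤ -V.eval s + (τ * s - w1) ^ 2 / (4 * b) - w0 := by
      intro s
      have hκ : 0 ≤ τ ^ 2 / (4 * b) - a := by
        rw [sub_nonneg, le_div_iff₀ (by linarith)]
        nlinarith
      have hid : (-V.eval s + (τ * s - w1) ^ 2 / (4 * b) - w0)
            - ((-v1 - 2 * (τ * w1) / (4 * b)) * s + (w1 ^ 2 / (4 * b) - v0 - w0))
          = (τ ^ 2 / (4 * b) - a) * s ^ 2 := by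
        rw [hVev s]
        simp only [div_eq_mul_inv]
        ring
      linarith [hid, mul_nonneg hκ (sq_nonneg s)]
    set β := -v1 - 2 * (τ * w1) / (4 * b) with hβ
    set γ := w1 ^ 2 / (4 * b) - v0 - w0 with hγ
    have hcpos : 0 < Real.sqrt (π / b) * Real.exp γ := by
      apply mul_pos (Real.sqrt_pos.2 (by positivity)) (Real.exp_pos _)
    have hnotint : ¬ Integrable (fun s : ℝ => ∫ t : ℝ, ω s t) := by
      rcases le_or_gt 0 β with hβ0 | hβ0
      · apply not_integrable_of_ge hcpos (Set.Ici 0) (by simp [Real.volume_Ici])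
          measurableSet_Ici
        intro s hs
        rw [hfval s]
        apply mul_le_mul_of_nonneg_left _ (Real.sqrt_nonneg _)
        apply Real.exp_le_exp.2
        have h0 : 0 ≤ β * s := mul_nonneg hβ0 (Set.mem_Ici.1 hs)
        calc γ ≤ β * s + γ := by linarith
          _ ≤ _ := hglb s
      · apply not_integrable_of_ge hcpos (Set.Iic 0) (by simp [Real.volume_Iic])
          measurableSet_Iic
        intro s hs
        rw [hfval s]
        apply mul_le_mul_of_nonneg_left _ (Real.sqrt_nonneg _)
        apply Real.exp_le_exp.2
        have h0 : 0 ≤ β * s := by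
          have h1 := mul_nonneg (neg_nonneg.2 hβ0.le) (neg_nonneg.2 (Set.mem_Iic.1 hs))
          calc (0:ℝ) ≤ -β * -s := h1
            _ = β * s := by ring
        calc γ ≤ β * s + γ := by linarith
          _ ≤ _ := hglb s
    exact h00 (integral_undef hnotint)

section
variable {V W : Polynomial ℝ} {τ : ℝ} {ω : ℝ → ℝ → ℝ}
  (hω : ∀ x y, ω x y = Real.exp (-V.eval x - W.eval y + τ * x * y))
  {δ C : ℝ} (hδ : 0 < δ)
  (hbd : ∀ s t : ℝ, -V.eval s - W.eval t + τ * s * t ≤ C - δ * (s ^ 2 + t ^ 2))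

include hω in
lemma omega_cont : Continuous fun st : ℝ × ℝ => ω st.1 st.2 := by
  have : (fun st : ℝ × ℝ => ω st.1 st.2)
      = fun st : ℝ × ℝ => Real.exp (-V.eval st.1 - W.eval st.2 + τ * st.1 * st.2) :=
    funext fun st => hω st.1 st.2
  rw [this]
  apply Real.continuous_exp.comp
  apply Continuous.add
  · exact ((V.continuous.comp continuous_fst).neg).sub (W.continuous.comp continuous_snd)
  · exact (continuous_const.mul continuous_fst).mul continuous_snd

include hω hδ hbd in
lemma omega_norm_bound (Q : Polynomial ℝ) (s t : ℝ) :
    ‖Q.eval t * ω s t‖ ≤ Real.exp (C - δ * s ^ 2) * (|Q.eval t| * Real.exp (-δ * t ^ 2)) := by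
  rw [Real.norm_eq_abs, abs_mul, hω, abs_of_pos (Real.exp_pos _)]
  have h1 : Real.exp (-V.eval s - W.eval t + τ * s * t)
      ≤ Real.exp ((C - δ * s ^ 2) + (-δ * t ^ 2)) := by
    apply Real.exp_le_exp.2
    have := hbd s t
    linarith
  calc |Q.eval t| * Real.exp (-V.eval s - W.eval t + τ * s * t)
      ≤ |Q.eval t| * Real.exp ((C - δ * s ^ 2) + (-δ * t ^ 2)) :=
        mul_le_mul_of_nonneg_left h1 (abs_nonneg _)
    _ = Real.exp (C - δ * s ^ 2) * (|Q.eval t| * Real.exp (-δ * t ^ 2)) := by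
        rw [Real.exp_add]; ring

include hω hδ hbd in
lemma int1 (Q : Polynomial ℝ) (s : ℝ) : Integrable fun t : ℝ => Q.eval t * ω s t := by
  have hg : Integrable fun t : ℝ =>
      Real.exp (C - δ * s ^ 2) * (|Q.eval t| * Real.exp (-δ * t ^ 2)) :=
    (integrable_poly_gauss Q hδ).const_mul _
  apply hg.mono' ?_ (Filter.Eventually.of_forall fun t => omega_norm_bound hω hδ hbd Q s t)
  exact (Q.continuous.mul ((omega_cont hω).comp (Continuous.prodMk_right s))).aestronglyMeasurable

include hω hδ hbd in
lemma int3 (P Q : Polynomial ℝ) :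
    Integrable fun s : ℝ => P.eval s * ∫ t : ℝ, Q.eval t * ω s t := by
  set M := ∫ t : ℝ, |Q.eval t| * Real.exp (-δ * t ^ 2) with hM
  have hM0 : 0 ≤ M := integral_nonneg fun t => by positivity
  have hJb : ∀ s : ℝ, ‖∫ t : ℝ, Q.eval t * ω s t‖ ≤ Real.exp (C - δ * s ^ 2) * M := by
    intro s
    refine (norm_integral_le_integral_norm _).trans ?_
    have hle : (∫ t : ℝ, ‖Q.eval t * ω s t‖)
        ≤ ∫ t : ℝ, Real.exp (C - δ * s ^ 2) * (|Q.eval t| * Real.exp (-δ * t ^ 2)) := by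
      apply integral_mono_of_nonneg
      · exact Filter.Eventually.of_forall fun t => norm_nonneg _
      · exact (integrable_poly_gauss Q hδ).const_mul _
      · exact Filter.Eventually.of_forall fun t => omega_norm_bound hω hδ hbd Q s t
    refine hle.trans ?_
    rw [integral_const_mul]
  have hmeas : AEStronglyMeasurable (fun s : ℝ => P.eval s * ∫ t : ℝ, Q.eval t * ω s t)
      volume := by
    apply AEStronglyMeasurable.mul P.continuous.aestronglyMeasurable
    have hc : Continuous fun st : ℝ × ℝ => Q.eval st.2 * ω st.1 st.2 :=
      (Q.continuous.comp continuous_snd).mul (omega_cont hω)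
    exact hc.stronglyMeasurable.integral_prod_right'.aestronglyMeasurable
  have hg : Integrable fun s : ℝ =>
      (Real.exp C * M) * (|P.eval s| * Real.exp (-δ * s ^ 2)) :=
    (integrable_poly_gauss P hδ).const_mul _
  apply hg.mono' hmeas
  filter_upwards with s
  rw [norm_mul]
  calc ‖P.eval s‖ * ‖∫ t : ℝ, Q.eval t * ω s t‖
      ≤ |P.eval s| * (Real.exp (C - δ * s ^ 2) * M) := by
        rw [Real.norm_eq_abs]
        exact mul_le_mul_of_nonneg_left (hJb s) (abs_nonneg _)
    _ = (Real.exp C * M) * (|P.eval s| * Real.exp (-δ * s ^ 2)) := by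
        rw [show C - δ * s ^ 2 = C + (-δ * s ^ 2) by ring, Real.exp_add]; ring

end

lemma det_vandermonde_cons {n : ℕ} (x : ℝ) (l : Fin n → ℝ) :
    (Matrix.vandermonde (Fin.cons x l)).det
      = (∏ k, (l k - x)) * (Matrix.vandermonde l).det := by
  rw [Matrix.det_vandermonde, Matrix.det_vandermonde, Fin.prod_univ_succ]
  congr 1
  · rw [Fin.prod_Ioi_zero]
    simp
  · refine Finset.prod_congr rfl fun i _ => ?_
    rw [Fin.prod_Ioi_succ]
    simp

lemma det_vandermonde_snoc {n : ℕ} (l : Fin n → ℝ) (x : ℝ) :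
    (Matrix.vandermonde (Fin.snoc l x)).det
      = (∏ k, (x - l k)) * (Matrix.vandermonde l).det := by
  have h1 : Matrix.vandermonde (Fin.snoc l x)
      = (Matrix.vandermonde (Fin.cons x l)).submatrix (finRotate (n + 1)) id := by
    funext i j
    rw [Fin.snoc_eq_cons_rotate]
    simp only [Matrix.vandermonde_apply, Matrix.submatrix_apply, id]
  rw [h1, Matrix.det_permute (finRotate (n + 1)) (Matrix.vandermonde (Fin.cons x l)),
    sign_finRotate, det_vandermonde_cons]
  have h2 : (∏ k, (x - l k)) = (-1 : ℝ) ^ n * ∏ k, (l k - x) := by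
    have : ∀ k : Fin n, (x - l k) = (-1) * (l k - x) := fun k => by ring
    rw [Finset.prod_congr rfl fun k _ => this k, Finset.prod_mul_distrib,
      Finset.prod_const, Finset.card_univ, Fintype.card_fin]
  rw [h2]
  push_cast
  ring

/-- bordered Vandermonde, expanded along the extra row via monic polynomials -/
lemma border {n : ℕ} (pf : ℕ → Polynomial ℝ) (hm : ∀ i, (pf i).Monic)
    (hd : ∀ i, (pf i).natDegree = i) (l : Fin n → ℝ) (x : ℝ) :
    (∏ k, (x - l k)) * (Matrix.vandermonde l).det
      = ∑ i : Fin (n + 1), ((-1 : ℝ) ^ (n + (i : ℕ)) * (pf (i : ℕ)).eval x) *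
          (Matrix.of fun r c : Fin n => (pf ((i.succAbove c : Fin (n+1)) : ℕ)).eval (l r)).det := by
  rw [← det_vandermonde_snoc l x,
    Matrix.det_eval_matrixOfPolynomials_eq_det_vandermonde (Fin.snoc l x)
      (fun j : Fin (n + 1) => pf (j : ℕ)) (fun i => hd i) (fun i => hm i),
    Matrix.det_succ_row _ (Fin.last n)]
  refine Finset.sum_congr rfl fun j _ => ?_
  have hA : (Matrix.of fun (i : Fin (n+1)) (j : Fin (n+1)) =>
      eval (Fin.snoc l x i) (pf (j : ℕ))) (Fin.last n) j = eval x (pf (j : ℕ)) := by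
    rw [Matrix.of_apply, Fin.snoc_last]
  have hsub : ((Matrix.of fun (i : Fin (n+1)) (j : Fin (n+1)) =>
        eval (Fin.snoc l x i) (pf (j : ℕ))).submatrix (Fin.last n).succAbove j.succAbove)
      = Matrix.of fun r c : Fin n => (pf ((j.succAbove c : Fin (n+1)) : ℕ)).eval (l r) := by
    ext r c
    rw [Matrix.submatrix_apply, Fin.succAbove_last, Matrix.of_apply, Fin.snoc_castSucc,
      Matrix.of_apply]
  rw [hA, hsub, Fin.val_last]
  try ring

lemma omega_det_transpose {n : ℕ} (ω : ℝ → ℝ → ℝ) (l m : Fin n → ℝ) :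
    (Matrix.of fun i j : Fin n => ω (l i) (m j)).det
      = (Matrix.of fun i j : Fin n => (fun (c : Fin n) (t : ℝ) => ω (l c) t) j (m i)).det := by
  rw [← Matrix.det_transpose (Matrix.of fun i j : Fin n => ω (l i) (m j))]
  rfl

/-- Andréief for one set of variables, coupling matrix in standard orientation. -/
lemma andreief_inner {N : ℕ} (ω : ℝ → ℝ → ℝ)
    (hint1 : ∀ (Q : Polynomial ℝ) (s : ℝ), Integrable fun t : ℝ => Q.eval t * ω s t)
    (Q : Fin N → Polynomial ℝ) (l : Fin N → ℝ) :
    (∫ m : Fin N → ℝ, (Matrix.of fun i j : Fin N => (Q j).eval (m i)).det *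
        (Matrix.of fun i j : Fin N => ω (l i) (m j)).det)
      = (N.factorial : ℝ) *
          (Matrix.of fun i j : Fin N => ∫ t : ℝ, (Q j).eval t * ω (l i) t).det := by
  simp_rw [omega_det_transpose ω l]
  rw [andreief (fun a t => (Q a).eval t) (fun b t => ω (l b) t)
    (fun a b => hint1 (Q a) (l b))]
  congr 1
  rw [← Matrix.det_transpose
    (Matrix.of fun a b : Fin N => ∫ t : ℝ, (Q a).eval t * ω (l b) t)]
  rfl

set_option maxHeartbeats 2000000 in
lemma numerator_value {n : ℕ} (ω : ℝ → ℝ → ℝ)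
    (hint1 : ∀ (Q : Polynomial ℝ) (s : ℝ), Integrable fun t : ℝ => Q.eval t * ω s t)
    (hint3 : ∀ P Q : Polynomial ℝ, Integrable fun s : ℝ => P.eval s * ∫ t : ℝ, Q.eval t * ω s t)
    (P Q : ℕ → Polynomial ℝ)
    (hPm : ∀ i, (P i).Monic) (hPd : ∀ i, (P i).natDegree = i)
    (hQm : ∀ i, (Q i).Monic) (hQd : ∀ i, (Q i).natDegree = i)
    (x y : ℝ) :
    (∫ l : Fin n → ℝ, ∫ m : Fin n → ℝ,
        (∏ k : Fin n, ((x - l k) * (y - m k))) *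
          ((Matrix.vandermonde l).det * (Matrix.vandermonde m).det *
            (Matrix.of fun i j : Fin n => ω (l i) (m j)).det))
      = ∑ i : Fin (n + 1), ∑ j : Fin (n + 1),
          (((-1 : ℝ) ^ (n + (i : ℕ)) * (P (i : ℕ)).eval x) *
           ((-1 : ℝ) ^ (n + (j : ℕ)) * (Q (j : ℕ)).eval y)) *
          ((n.factorial : ℝ) * ((n.factorial : ℝ) *
            (Matrix.of fun a b : Fin n =>
              ∫ s : ℝ, (P ((i.succAbove a : Fin (n+1)) : ℕ)).eval s *
                ∫ t : ℝ, (Q ((j.succAbove b : Fin (n+1)) : ℕ)).eval t * ω s t).det)) := by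
  -- pointwise expansion of the integrand
  have hpt : ∀ l m : Fin n → ℝ,
      (∏ k : Fin n, ((x - l k) * (y - m k))) *
          ((Matrix.vandermonde l).det * (Matrix.vandermonde m).det *
            (Matrix.of fun i j : Fin n => ω (l i) (m j)).det)
      = ∑ i : Fin (n + 1), ∑ j : Fin (n + 1),
          (((-1 : ℝ) ^ (n + (i : ℕ)) * (P (i : ℕ)).eval x) *
           ((-1 : ℝ) ^ (n + (j : ℕ)) * (Q (j : ℕ)).eval y)) *
          ((Matrix.of fun r c : Fin n =>
              (P ((i.succAbove c : Fin (n+1)) : ℕ)).eval (l r)).det *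
           ((Matrix.of fun r c : Fin n =>
              (Q ((j.succAbove c : Fin (n+1)) : ℕ)).eval (m r)).det *
            (Matrix.of fun i j : Fin n => ω (l i) (m j)).det)) := by
    intro l m
    have h0 : (∏ k : Fin n, ((x - l k) * (y - m k)))
        = (∏ k : Fin n, (x - l k)) * ∏ k : Fin n, (y - m k) := Finset.prod_mul_distrib
    have h1 := border P hPm hPd l x
    have h2 := border Q hQm hQd m y
    calc (∏ k : Fin n, ((x - l k) * (y - m k))) *
          ((Matrix.vandermonde l).det * (Matrix.vandermonde m).det *
            (Matrix.of fun i j : Fin n => ω (l i) (m j)).det)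
        = ((∏ k : Fin n, (x - l k)) * (Matrix.vandermonde l).det) *
          (((∏ k : Fin n, (y - m k)) * (Matrix.vandermonde m).det) *
            (Matrix.of fun i j : Fin n => ω (l i) (m j)).det) := by rw [h0]; ring
      _ = _ := by
          rw [h1, h2, Finset.sum_mul]
          refine Finset.sum_congr rfl fun i _ => ?_
          rw [Finset.sum_mul, Finset.mul_sum]
          refine Finset.sum_congr rfl fun j _ => ?_
          ring
  simp_rw [hpt]
  -- integrability of each term in `m`
  have hQiint : ∀ (j : Fin (n+1)) (l : Fin n → ℝ),
      Integrable (fun m : Fin n → ℝ =>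
        (Matrix.of fun r c : Fin n =>
          (Q ((j.succAbove c : Fin (n+1)) : ℕ)).eval (m r)).det *
        (Matrix.of fun i j : Fin n => ω (l i) (m j)).det) := by
    intro j l
    have heq : (fun m : Fin n → ℝ =>
        (Matrix.of fun r c : Fin n =>
          (Q ((j.succAbove c : Fin (n+1)) : ℕ)).eval (m r)).det *
        (Matrix.of fun i j : Fin n => ω (l i) (m j)).det)
        = fun m : Fin n → ℝ =>
        (Matrix.of fun r c : Fin n =>
          (fun (c : Fin n) (t : ℝ) => (Q ((j.succAbove c : Fin (n+1)) : ℕ)).eval t) c (m r)).det *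
        (Matrix.of fun r c : Fin n => (fun (c : Fin n) (t : ℝ) => ω (l c) t) c (m r)).det := by
      funext m
      rw [omega_det_transpose ω l m]
    rw [heq]
    exact det_det_integrable _ _ (fun a b => hint1 _ _)
  have hinner : ∀ (i j : Fin (n+1)) (l : Fin n → ℝ),
      Integrable (fun m : Fin n → ℝ =>
        (((-1 : ℝ) ^ (n + (i : ℕ)) * (P (i : ℕ)).eval x) *
         ((-1 : ℝ) ^ (n + (j : ℕ)) * (Q (j : ℕ)).eval y)) *
        ((Matrix.of fun r c : Fin n =>
            (P ((i.succAbove c : Fin (n+1)) : ℕ)).eval (l r)).det *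
         ((Matrix.of fun r c : Fin n =>
            (Q ((j.succAbove c : Fin (n+1)) : ℕ)).eval (m r)).det *
          (Matrix.of fun i j : Fin n => ω (l i) (m j)).det))) := by
    intro i j l
    exact (((hQiint j l).const_mul _).const_mul _)
  -- evaluate the inner integral
  have hval : ∀ (i j : Fin (n+1)) (l : Fin n → ℝ),
      (∫ m : Fin n → ℝ,
        (((-1 : ℝ) ^ (n + (i : ℕ)) * (P (i : ℕ)).eval x) *
         ((-1 : ℝ) ^ (n + (j : ℕ)) * (Q (j : ℕ)).eval y)) *
        ((Matrix.of fun r c : Fin n =>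
            (P ((i.succAbove c : Fin (n+1)) : ℕ)).eval (l r)).det *
         ((Matrix.of fun r c : Fin n =>
            (Q ((j.succAbove c : Fin (n+1)) : ℕ)).eval (m r)).det *
          (Matrix.of fun i j : Fin n => ω (l i) (m j)).det)))
      = (((-1 : ℝ) ^ (n + (i : ℕ)) * (P (i : ℕ)).eval x) *
         ((-1 : ℝ) ^ (n + (j : ℕ)) * (Q (j : ℕ)).eval y)) *
        ((Matrix.of fun r c : Fin n =>
            (P ((i.succAbove c : Fin (n+1)) : ℕ)).eval (l r)).det *
         ((n.factorial : ℝ) *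
          (Matrix.of fun r c : Fin n =>
            ∫ t : ℝ, (Q ((j.succAbove c : Fin (n+1)) : ℕ)).eval t * ω (l r) t).det)) := by
    intro i j l
    rw [integral_const_mul, integral_const_mul,
      andreief_inner ω hint1 (fun c => Q ((j.succAbove c : Fin (n+1)) : ℕ)) l]
  -- swap the inner integral with the double sum
  have hswap1 : (fun l : Fin n → ℝ => ∫ m : Fin n → ℝ,
      ∑ i : Fin (n + 1), ∑ j : Fin (n + 1),
          (((-1 : ℝ) ^ (n + (i : ℕ)) * (P (i : ℕ)).eval x) *
           ((-1 : ℝ) ^ (n + (j : ℕ)) * (Q (j : ℕ)).eval y)) *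
          ((Matrix.of fun r c : Fin n =>
              (P ((i.succAbove c : Fin (n+1)) : ℕ)).eval (l r)).det *
           ((Matrix.of fun r c : Fin n =>
              (Q ((j.succAbove c : Fin (n+1)) : ℕ)).eval (m r)).det *
            (Matrix.of fun i j : Fin n => ω (l i) (m j)).det)))
      = fun l : Fin n → ℝ => ∑ i : Fin (n + 1), ∑ j : Fin (n + 1),
          (((-1 : ℝ) ^ (n + (i : ℕ)) * (P (i : ℕ)).eval x) *
           ((-1 : ℝ) ^ (n + (j : ℕ)) * (Q (j : ℕ)).eval y)) *
          ((Matrix.of fun r c : Fin n =>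
              (P ((i.succAbove c : Fin (n+1)) : ℕ)).eval (l r)).det *
           ((n.factorial : ℝ) *
            (Matrix.of fun r c : Fin n =>
              ∫ t : ℝ, (Q ((j.succAbove c : Fin (n+1)) : ℕ)).eval t * ω (l r) t).det)) := by
    funext l
    rw [integral_finset_sum _ (fun i _ => integrable_finset_sum _ (fun j _ => hinner i j l))]
    refine Finset.sum_congr rfl fun i _ => ?_
    rw [integral_finset_sum _ (fun j _ => hinner i j l)]
    exact Finset.sum_congr rfl fun j _ => hval i j l
  rw [hswap1]
  -- integrability in `l` of each term
  have houter : ∀ (i j : Fin (n+1)),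
      Integrable (fun l : Fin n → ℝ =>
        (((-1 : ℝ) ^ (n + (i : ℕ)) * (P (i : ℕ)).eval x) *
         ((-1 : ℝ) ^ (n + (j : ℕ)) * (Q (j : ℕ)).eval y)) *
        ((Matrix.of fun r c : Fin n =>
            (P ((i.succAbove c : Fin (n+1)) : ℕ)).eval (l r)).det *
         ((n.factorial : ℝ) *
          (Matrix.of fun r c : Fin n =>
            ∫ t : ℝ, (Q ((j.succAbove c : Fin (n+1)) : ℕ)).eval t * ω (l r) t).det))) := by
    intro i j
    have heq : (fun l : Fin n → ℝ =>
        (((-1 : ℝ) ^ (n + (i : ℕ)) * (P (i : ℕ)).eval x) *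
         ((-1 : ℝ) ^ (n + (j : ℕ)) * (Q (j : ℕ)).eval y)) *
        ((Matrix.of fun r c : Fin n =>
            (P ((i.succAbove c : Fin (n+1)) : ℕ)).eval (l r)).det *
         ((n.factorial : ℝ) *
          (Matrix.of fun r c : Fin n =>
            ∫ t : ℝ, (Q ((j.succAbove c : Fin (n+1)) : ℕ)).eval t * ω (l r) t).det)))
        = fun l : Fin n → ℝ =>
          ((((-1 : ℝ) ^ (n + (i : ℕ)) * (P (i : ℕ)).eval x) *
           ((-1 : ℝ) ^ (n + (j : ℕ)) * (Q (j : ℕ)).eval y)) * (n.factorial : ℝ)) *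
          ((Matrix.of fun r c : Fin n =>
             (fun (c : Fin n) (s : ℝ) =>
               (P ((i.succAbove c : Fin (n+1)) : ℕ)).eval s) c (l r)).det *
           (Matrix.of fun r c : Fin n =>
             (fun (c : Fin n) (s : ℝ) =>
               ∫ t : ℝ, (Q ((j.succAbove c : Fin (n+1)) : ℕ)).eval t * ω s t) c (l r)).det) := by
      funext l
      ring
    rw [heq]
    exact (det_det_integrable _ _ (fun a b => hint3 _ _)).const_mul _
  rw [integral_finset_sum _ (fun i _ => integrable_finset_sum _ (fun j _ => houter i j))]
  refine Finset.sum_congr rfl fun i _ => ?_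
  rw [integral_finset_sum _ (fun j _ => houter i j)]
  refine Finset.sum_congr rfl fun j _ => ?_
  -- evaluate the outer integral
  have heq2 : (fun l : Fin n → ℝ =>
      (((-1 : ℝ) ^ (n + (i : ℕ)) * (P (i : ℕ)).eval x) *
       ((-1 : ℝ) ^ (n + (j : ℕ)) * (Q (j : ℕ)).eval y)) *
      ((Matrix.of fun r c : Fin n =>
          (P ((i.succAbove c : Fin (n+1)) : ℕ)).eval (l r)).det *
       ((n.factorial : ℝ) *
        (Matrix.of fun r c : Fin n =>
          ∫ t : ℝ, (Q ((j.succAbove c : Fin (n+1)) : ℕ)).eval t * ω (l r) t).det)))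
      = fun l : Fin n → ℝ =>
        ((((-1 : ℝ) ^ (n + (i : ℕ)) * (P (i : ℕ)).eval x) *
         ((-1 : ℝ) ^ (n + (j : ℕ)) * (Q (j : ℕ)).eval y)) * (n.factorial : ℝ)) *
        ((Matrix.of fun r c : Fin n =>
           (fun (c : Fin n) (s : ℝ) =>
             (P ((i.succAbove c : Fin (n+1)) : ℕ)).eval s) c (l r)).det *
         (Matrix.of fun r c : Fin n =>
           (fun (c : Fin n) (s : ℝ) =>
             ∫ t : ℝ, (Q ((j.succAbove c : Fin (n+1)) : ℕ)).eval t * ω s t) c (l r)).det) := by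
    funext l
    ring
  rw [heq2, integral_const_mul,
    andreief (fun c s => (P ((i.succAbove c : Fin (n+1)) : ℕ)).eval s)
      (fun c s => ∫ t : ℝ, (Q ((j.succAbove c : Fin (n+1)) : ℕ)).eval t * ω s t)
      (fun a b => hint3 _ _)]
  ring

lemma gram_det {n : ℕ} (h : ℕ → ℝ) (i j : Fin (n + 1)) :
    (Matrix.of fun a b : Fin n =>
        if ((i.succAbove a : Fin (n+1)) : ℕ) = ((j.succAbove b : Fin (n+1)) : ℕ)
        then h ((i.succAbove a : Fin (n+1)) : ℕ) else 0).det
      = if i = j then ∏ a : Fin n, h ((i.succAbove a : Fin (n+1)) : ℕ) else 0 := by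
  by_cases hij : i = j
  · subst hij
    rw [if_pos rfl]
    have hdiag : (Matrix.of fun a b : Fin n =>
        if ((i.succAbove a : Fin (n+1)) : ℕ) = ((i.succAbove b : Fin (n+1)) : ℕ)
        then h ((i.succAbove a : Fin (n+1)) : ℕ) else 0)
        = Matrix.diagonal (fun a : Fin n => h ((i.succAbove a : Fin (n+1)) : ℕ)) := by
      ext a b
      rw [Matrix.of_apply]
      by_cases hab : a = b
      · subst hab
        rw [if_pos rfl, Matrix.diagonal_apply_eq]
      · rw [Matrix.diagonal_apply_ne _ hab, if_neg]
        intro hc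
        exact hab (Fin.succAbove_right_injective (Fin.val_injective hc))
    rw [hdiag, Matrix.det_diagonal]
  · rw [if_neg hij]
    obtain ⟨a₀, ha₀⟩ := Fin.exists_succAbove_eq (show j ≠ i from fun hc => hij hc.symm)
    apply Matrix.det_eq_zero_of_row_eq_zero a₀
    intro c
    rw [Matrix.of_apply, if_neg]
    rw [ha₀]
    intro hc
    exact (Fin.succAbove_ne j c) (Fin.val_injective hc.symm)

end Stmt19Aux

open Stmt19Aux


/-- In the two-matrix model, the average of the product of both characteristic polynomials is
`E[∏ₘ (x−λₘ)(y−μₘ)] = Σ_{i=0}^{n} (hₙ²/hᵢ²) pᵢ(x) qᵢ(y)` (Theorem 3, case `(1,1,0,0)`). -/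
theorem stmt_19 (V W : Polynomial ℝ) (τ : ℝ)
    (hVe : Even V.natDegree) (hVd : 0 < V.natDegree) (hVl : 0 < V.leadingCoeff)
    (hWe : Even W.natDegree) (hWd : 0 < W.natDegree) (hWl : 0 < W.leadingCoeff)
    (ω : ℝ → ℝ → ℝ)
    (hω : ∀ x y, ω x y = Real.exp (-V.eval x - W.eval y + τ * x * y))
    (p q : ℕ → Polynomial ℝ) (hsq : ℕ → ℝ)
    (hpm : ∀ i, (p i).Monic) (hpd : ∀ i, (p i).natDegree = i)
    (hqm : ∀ j, (q j).Monic) (hqd : ∀ j, (q j).natDegree = j)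
    (hh : ∀ i, 0 < hsq i)
    (hbi : ∀ i j, (∫ x : ℝ, ∫ y : ℝ, (p i).eval x * (q j).eval y * ω x y)
      = if i = j then hsq i else 0)
    (n : ℕ) (Z : ℝ)
    (hZ : Z = ∫ l : Fin n → ℝ, ∫ m : Fin n → ℝ,
      (Matrix.vandermonde l).det * (Matrix.vandermonde m).det *
        (Matrix.of fun i j : Fin n => ω (l i) (m j)).det)
    (hZ0 : Z ≠ 0) :
    ∀ x y : ℝ,
      (∫ l : Fin n → ℝ, ∫ m : Fin n → ℝ,
        (∏ k : Fin n, ((x - l k) * (y - m k))) *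
          ((Matrix.vandermonde l).det * (Matrix.vandermonde m).det *
            (Matrix.of fun i j : Fin n => ω (l i) (m j)).det)) / Z
      = ∑ i ∈ Finset.range (n + 1), (hsq n / hsq i) * (p i).eval x * (q i).eval y := by
  intro x y
  have hp0 : p 0 = 1 := (hpm 0).natDegree_eq_zero.mp (hpd 0)
  have hq0 : q 0 = 1 := (hqm 0).natDegree_eq_zero.mp (hqd 0)
  have h00 : (∫ s : ℝ, ∫ t : ℝ, ω s t) ≠ 0 := by
    have h0 := hbi 0 0
    rw [if_pos rfl] at h0
    have heq : (∫ s : ℝ, ∫ t : ℝ, (p 0).eval s * (q 0).eval t * ω s t)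
        = ∫ s : ℝ, ∫ t : ℝ, ω s t := by
      simp [hp0, hq0]
    rw [heq] at h0
    rw [h0]
    exact ne_of_gt (hh 0)
  obtain ⟨δ, C, hδ, hbd⟩ := master_bound V W τ hVe hVd hVl hWe hWd hWl ω hω h00
  have hint1 : ∀ (Q : Polynomial ℝ) (s : ℝ), Integrable fun t : ℝ => Q.eval t * ω s t :=
    fun Q s => int1 hω hδ hbd Q s
  have hint3 : ∀ P Q : Polynomial ℝ,
      Integrable fun s : ℝ => P.eval s * ∫ t : ℝ, Q.eval t * ω s t :=
    fun P Q => int3 hω hδ hbd P Q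
  have hD : ∀ i j : ℕ, (∫ s : ℝ, (p i).eval s * ∫ t : ℝ, (q j).eval t * ω s t)
      = if i = j then hsq i else 0 := by
    intro i j
    rw [← hbi i j]
    have hpull : ∀ s : ℝ, (∫ t : ℝ, (p i).eval s * (q j).eval t * ω s t)
        = (p i).eval s * ∫ t : ℝ, (q j).eval t * ω s t := by
      intro s
      simp_rw [mul_assoc]
      rw [integral_const_mul]
    simp_rw [hpull]
  -- the partition function
  have hprodpos : 0 < ∏ k : Fin n, hsq (k : ℕ) := Finset.prod_pos fun k _ => hh _
  have hfacpos : (0 : ℝ) < (n.factorial : ℝ) := by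
    exact_mod_cast n.factorial_pos
  have hZval : Z = (n.factorial : ℝ) * (n.factorial : ℝ) * ∏ k : Fin n, hsq (k : ℕ) := by
    rw [hZ]
    have hpt : ∀ l m : Fin n → ℝ,
        (Matrix.vandermonde l).det * (Matrix.vandermonde m).det *
          (Matrix.of fun i j : Fin n => ω (l i) (m j)).det
        = (Matrix.of fun i j : Fin n => ((fun c : Fin n => p (c : ℕ)) j).eval (l i)).det *
          ((Matrix.of fun i j : Fin n => ((fun c : Fin n => q (c : ℕ)) j).eval (m i)).det *
           (Matrix.of fun i j : Fin n => ω (l i) (m j)).det) := by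
      intro l m
      rw [Matrix.det_eval_matrixOfPolynomials_eq_det_vandermonde l
          (fun c : Fin n => p (c : ℕ)) (fun c => hpd c) (fun c => hpm c),
        Matrix.det_eval_matrixOfPolynomials_eq_det_vandermonde m
          (fun c : Fin n => q (c : ℕ)) (fun c => hqd c) (fun c => hqm c)]
      ring
    simp_rw [hpt]
    rw [double_andreief ω hint1 hint3 (fun c : Fin n => p (c : ℕ)) (fun c : Fin n => q (c : ℕ))]
    congr 1
    have hdiag : (Matrix.of fun a b : Fin n =>
        ∫ s : ℝ, (p (a : ℕ)).eval s * ∫ t : ℝ, (q (b : ℕ)).eval t * ω s t)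
        = Matrix.diagonal fun a : Fin n => hsq (a : ℕ) := by
      ext a b
      rw [Matrix.of_apply, hD (a : ℕ) (b : ℕ)]
      by_cases hab : a = b
      · subst hab
        rw [if_pos rfl, Matrix.diagonal_apply_eq]
      · rw [Matrix.diagonal_apply_ne _ hab, if_neg (fun hc => hab (Fin.val_injective hc))]
    rw [hdiag, Matrix.det_diagonal]
  -- the numerator
  have hNum := numerator_value (n := n) ω hint1 hint3 p q hpm hpd hqm hqd x y
  -- rewrite each Gram determinant
  have hGram : ∀ i j : Fin (n + 1),
      (Matrix.of fun a b : Fin n =>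
        ∫ s : ℝ, (p ((i.succAbove a : Fin (n+1)) : ℕ)).eval s *
          ∫ t : ℝ, (q ((j.succAbove b : Fin (n+1)) : ℕ)).eval t * ω s t).det
      = if i = j then ∏ a : Fin n, hsq ((i.succAbove a : Fin (n+1)) : ℕ) else 0 := by
    intro i j
    rw [← gram_det hsq i j]
    congr 1
    ext a b
    rw [Matrix.of_apply, Matrix.of_apply, hD]
  simp_rw [hGram] at hNum
  -- collapse the double sum
  have hprodsA : ∀ i : Fin (n + 1),
      hsq (i : ℕ) * ∏ a : Fin n, hsq ((i.succAbove a : Fin (n+1)) : ℕ)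
        = (∏ k : Fin n, hsq (k : ℕ)) * hsq n := by
    intro i
    have h1 := Fin.prod_univ_succAbove (fun k : Fin (n + 1) => hsq (k : ℕ)) i
    have h2 : (∏ k : Fin (n + 1), hsq (k : ℕ)) = (∏ k : Fin n, hsq (k : ℕ)) * hsq n := by
      rw [Fin.prod_univ_castSucc]
      simp
    rw [← h1, h2]
  have hcollapse : ∀ i : Fin (n + 1),
      (∑ j : Fin (n + 1),
          (((-1 : ℝ) ^ (n + (i : ℕ)) * (p (i : ℕ)).eval x) *
           ((-1 : ℝ) ^ (n + (j : ℕ)) * (q (j : ℕ)).eval y)) *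
          ((n.factorial : ℝ) * ((n.factorial : ℝ) *
            (if i = j then ∏ a : Fin n, hsq ((i.succAbove a : Fin (n+1)) : ℕ) else 0))))
      = (p (i : ℕ)).eval x * (q (i : ℕ)).eval y *
          ((n.factorial : ℝ) * (n.factorial : ℝ) *
            ∏ a : Fin n, hsq ((i.succAbove a : Fin (n+1)) : ℕ)) := by
    intro i
    rw [Finset.sum_eq_single i]
    · rw [if_pos rfl]
      have hsgn : ((-1 : ℝ) ^ (n + (i : ℕ))) * ((-1 : ℝ) ^ (n + (i : ℕ))) = 1 := by
        rw [← pow_add]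
        exact Even.neg_one_pow ⟨n + (i : ℕ), by ring⟩
      calc (((-1 : ℝ) ^ (n + (i : ℕ)) * (p (i : ℕ)).eval x) *
           ((-1 : ℝ) ^ (n + (i : ℕ)) * (q (i : ℕ)).eval y)) *
          ((n.factorial : ℝ) * ((n.factorial : ℝ) *
            (∏ a : Fin n, hsq ((i.succAbove a : Fin (n+1)) : ℕ))))
          = (((-1 : ℝ) ^ (n + (i : ℕ))) * ((-1 : ℝ) ^ (n + (i : ℕ)))) *
            ((p (i : ℕ)).eval x * (q (i : ℕ)).eval y *
              ((n.factorial : ℝ) * (n.factorial : ℝ) *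
                ∏ a : Fin n, hsq ((i.succAbove a : Fin (n+1)) : ℕ))) := by ring
        _ = _ := by rw [hsgn, one_mul]
    · intro j _ hji
      rw [if_neg (fun hc => hji hc.symm)]
      ring
    · intro hni
      exact absurd (Finset.mem_univ i) hni
  simp_rw [hcollapse] at hNum
  rw [hNum, hZval]
  rw [Finset.sum_div]
  have hconv : ∀ i : Fin (n + 1),
      (p (i : ℕ)).eval x * (q (i : ℕ)).eval y *
          ((n.factorial : ℝ) * (n.factorial : ℝ) *
            ∏ a : Fin n, hsq ((i.succAbove a : Fin (n+1)) : ℕ)) /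
        ((n.factorial : ℝ) * (n.factorial : ℝ) * ∏ k : Fin n, hsq (k : ℕ))
      = (hsq n / hsq (i : ℕ)) * (p (i : ℕ)).eval x * (q (i : ℕ)).eval y := by
    intro i
    have hpd := hprodsA i
    have hne1 : (n.factorial : ℝ) ≠ 0 := ne_of_gt hfacpos
    have hne2 : (∏ k : Fin n, hsq (k : ℕ)) ≠ 0 := ne_of_gt hprodpos
    have hne3 : hsq (i : ℕ) ≠ 0 := ne_of_gt (hh _)
    field_simp
    linear_combination ((p (i : ℕ)).eval x * (q (i : ℕ)).eval y) * hpd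
  simp_rw [hconv]
  exact Fin.sum_univ_eq_sum_range
    (fun i : ℕ => (hsq n / hsq i) * (p i).eval x * (q i).eval y) (n + 1)
end
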